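/- arXiv:1111.5561 — 7 statements merged into one kernel-verified Lean document; each statement's English description precedes it below -/
import Mathlib

section
/- Let f be a homeomorphism of the torus T² homotopic to a Dehn twist, with lift f̂ to the vertical cylinder A. The set ω(B_S⁻) = ∩_{n≥0} closure(∪_{i≥n} f̂ⁱ(B_S⁻)) is closed, f̂-invariant (f̂(ω(B_S⁻)) = ω(B_S⁻)), and every connected component of ω(B_S⁻) is unbounded. -/
noncomputable section

open MeasureTheory

abbrev Torus := AddCircle (1 : ℝ) × AddCircle (1 : ℝ)
abbrev Cyl := AddCircle (1 : ℝ) × ℝ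

/-- The covering map from the plane to the vertical cylinder. -/
def projCyl (z : ℝ × ℝ) : Cyl := ((z.1 : AddCircle (1 : ℝ)), z.2)

/-- The covering map from the plane to the torus. -/
def projTorus (z : ℝ × ℝ) : Torus := ((z.1 : AddCircle (1 : ℝ)), (z.2 : AddCircle (1 : ℝ)))

/-- A lift to the plane of a torus homeomorphism homotopic to a Dehn twist:
a homeomorphism of the plane commuting with integer horizontal translations and
satisfying the Dehn-twist relation for vertical translations, with twist
coefficient `k > 0`. -/
structure DehnLift where
  F : (ℝ × ℝ) ≃ₜ (ℝ × ℝ)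
  k : ℤ
  k_pos : 0 < k
  horiz : ∀ x y : ℝ, F (x + 1, y) = F (x, y) + (1, 0)
  vert : ∀ x y : ℝ, F (x, y + 1) = F (x, y) + ((k : ℝ), 1)

/-- The vertical rotation set of a cylinder map:
`ρ_V(f̂) = ∩_{i≥1} closure( ∪_{n≥i} { (p₂(f̂ⁿ(ẑ)) − p₂(ẑ))/n : ẑ ∈ A } )`. -/
def rotSet (fhat : Cyl → Cyl) : Set ℝ :=
  ⋂ i : ℕ, closure (⋃ n : ℕ, ⋃ _ : i + 1 ≤ n,
    {r : ℝ | ∃ z : Cyl, r = ((fhat^[n] z).2 - z.2) / n})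

/-- A subset of the cylinder is bounded iff its second-coordinate projection is
a bounded subset of `ℝ`. -/
def VBounded (S : Set Cyl) : Prop := ∃ M : ℝ, ∀ z ∈ S, |z.2| ≤ M

/-- `B⁻ = {ẑ : f̂ⁿ(ẑ) ∈ H⁻ for all n ≥ 0}` where `H⁻ = (ℝ/ℤ)×(−∞,0]`. -/
def Bminus (fhat : Cyl → Cyl) : Set Cyl := {z | ∀ n : ℕ, (fhat^[n] z).2 ≤ 0}

/-- `B⁺ = {ẑ : f̂ⁿ(ẑ) ∈ H⁺ for all n ≥ 0}` where `H⁺ = (ℝ/ℤ)×[0,∞)`. -/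
def Bplus (fhat : Cyl → Cyl) : Set Cyl := {z | ∀ n : ℕ, 0 ≤ (fhat^[n] z).2}

/-- `B_S⁻`: the union of the unbounded connected components of `B⁻`. -/
def BS (fhat : Cyl → Cyl) : Set Cyl :=
  {z | z ∈ Bminus fhat ∧ ¬ VBounded (connectedComponentIn (Bminus fhat) z)}

/-- `B_N⁺`: the union of the unbounded connected components of `B⁺`. -/
def BN (fhat : Cyl → Cyl) : Set Cyl :=
  {z | z ∈ Bplus fhat ∧ ¬ VBounded (connectedComponentIn (Bplus fhat) z)}

/-- The ω-limit set `ω(S) = ∩_{n≥0} closure(∪_{i≥n} f̂ⁱ(S))`. -/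
def omegaSet (fhat : Cyl → Cyl) (S : Set Cyl) : Set Cyl :=
  ⋂ n : ℕ, closure (⋃ i : ℕ, ⋃ _ : n ≤ i, fhat^[i] '' S)

namespace DT
open Topology

lemma projCyl_cont : Continuous projCyl :=
  (continuous_quotient_mk'.comp continuous_fst).prodMk continuous_snd

lemma projCyl_surj : Function.Surjective projCyl := by
  rintro ⟨x, y⟩
  obtain ⟨a, rfl⟩ := QuotientAddGroup.mk_surjective x
  exact ⟨(a, y), rfl⟩

lemma projCyl_qm : IsQuotientMap projCyl :=
  IsOpenMap.isQuotientMap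
    (IsOpenMap.prodMap QuotientAddGroup.isOpenMap_coe IsOpenMap.id)
    projCyl_cont projCyl_surj

lemma projCyl_eq_exists {u v : ℝ × ℝ} (h : projCyl u = projCyl v) :
    ∃ n : ℤ, v = u + ((n : ℝ), 0) := by
  obtain ⟨h1, h2⟩ := Prod.ext_iff.mp h
  simp only [projCyl] at h1 h2
  rw [QuotientAddGroup.eq] at h1
  obtain ⟨n, hn⟩ := AddSubgroup.mem_zmultiples_iff.mp h1
  refine ⟨n, ?_⟩
  have hn' : (n : ℝ) = -u.1 + v.1 := by rw [← hn]; push_cast [zsmul_eq_mul]; ring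
  ext
  · simp only [Prod.fst_add]; rw [hn']; ring
  · simpa using h2.symm

lemma projCyl_add_int (u : ℝ × ℝ) (n : ℤ) : projCyl (u + ((n : ℝ), 0)) = projCyl u := by
  unfold projCyl
  ext
  · show (↑(u.1 + (n : ℝ)) : AddCircle (1:ℝ)) = ↑u.1
    rw [QuotientAddGroup.eq]
    exact AddSubgroup.mem_zmultiples_iff.mpr ⟨-n, by push_cast [zsmul_eq_mul]; ring⟩
  · simp

variable (L : DehnLift)

lemma F_one (u : ℝ × ℝ) : L.F (u + (1, 0)) = L.F u + (1, 0) := by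
  have h := L.horiz u.1 u.2
  have hu : ((u.1 + 1 : ℝ), u.2) = u + ((1:ℝ), 0) := by ext <;> simp
  rw [hu] at h
  simpa using h

lemma F_neg_one (u : ℝ × ℝ) : L.F (u + (-1, 0)) = L.F u + (-1, 0) := by
  have h := F_one L (u + (-1, 0))
  have : u + ((-1 : ℝ), 0) + (1, 0) = u := by ext <;> simp
  rw [this] at h
  have := h.symm
  ext
  · have := congrArg Prod.fst this
    simp only [Prod.fst_add] at this ⊢
    linarith
  · have := congrArg Prod.snd this
    simp only [Prod.snd_add] at this ⊢
    linarith

lemma F_int : ∀ (n : ℤ) (u : ℝ × ℝ), L.F (u + ((n : ℝ), 0)) = L.F u + ((n : ℝ), 0) := by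
  intro n
  induction n using Int.induction_on with
  | zero => intro u; simp [Prod.mk_zero_zero]
  | succ k ih =>
      intro u
      push_cast at ih ⊢
      have e1 : u + ((k : ℝ) + 1, 0) = (u + ((k : ℝ), 0)) + (1, 0) := by
        ext <;> simp only [Prod.fst_add, Prod.snd_add] <;> ring
      rw [e1, F_one, ih]
      ext <;> simp only [Prod.fst_add, Prod.snd_add] <;> ring
  | pred k ih =>
      intro u
      push_cast at ih ⊢
      have e1 : u + (-(k : ℝ) - 1, 0) = (u + (-(k : ℝ), 0)) + (-1, 0) := by
        ext <;> simp only [Prod.fst_add, Prod.snd_add] <;> ring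
      rw [e1, F_neg_one, ih]
      ext <;> simp only [Prod.fst_add, Prod.snd_add] <;> ring

lemma Fsymm_int (n : ℤ) (u : ℝ × ℝ) :
    L.F.symm (u + ((n : ℝ), 0)) = L.F.symm u + ((n : ℝ), 0) := by
  apply L.F.injective
  rw [F_int, L.F.apply_symm_apply, L.F.apply_symm_apply]

lemma projCyl_F_congr {u v : ℝ × ℝ} (h : projCyl u = projCyl v) :
    projCyl (L.F u) = projCyl (L.F v) := by
  obtain ⟨n, rfl⟩ := projCyl_eq_exists h
  rw [F_int, projCyl_add_int]

lemma projCyl_Fsymm_congr {u v : ℝ × ℝ} (h : projCyl u = projCyl v) :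
    projCyl (L.F.symm u) = projCyl (L.F.symm v) := by
  obtain ⟨n, rfl⟩ := projCyl_eq_exists h
  rw [Fsymm_int, projCyl_add_int]


def liftCyl (z : Cyl) : ℝ × ℝ := ((AddCircle.equivIco 1 0 z.1 : ℝ), z.2)

lemma projCyl_liftCyl (z : Cyl) : projCyl (liftCyl z) = z := by
  unfold projCyl liftCyl
  ext
  · have h := (AddCircle.equivIco 1 0).symm_apply_apply z.1
    rw [AddCircle.equivIco, QuotientAddGroup.equivIcoMod_symm_apply] at h
    exact h
  · rfl

def ghat : Cyl → Cyl := fun z => projCyl (L.F.symm (liftCyl z))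

lemma ghat_proj (u : ℝ × ℝ) : ghat L (projCyl u) = projCyl (L.F.symm u) := by
  unfold ghat
  exact projCyl_Fsymm_congr L (projCyl_liftCyl (projCyl u))

variable {fhat : Cyl → Cyl} (hfhat : ∀ z : ℝ × ℝ, projCyl (L.F z) = fhat (projCyl z))

include hfhat

lemma fhat_cont : Continuous fhat := by
  rw [projCyl_qm.continuous_iff]
  have : fhat ∘ projCyl = fun u => projCyl (L.F u) := by
    funext u; exact (hfhat u).symm
  rw [this]
  exact projCyl_cont.comp L.F.continuous

lemma ghat_cont : Continuous (ghat L) := by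
  rw [projCyl_qm.continuous_iff]
  have : ghat L ∘ projCyl = fun u => projCyl (L.F.symm u) := by
    funext u; exact ghat_proj L u
  rw [this]
  exact projCyl_cont.comp L.F.symm.continuous

/-- `fhat` as a homeomorphism of the cylinder. -/
def Hhat : Cyl ≃ₜ Cyl where
  toFun := fhat
  invFun := ghat L
  left_inv := by
    intro z
    obtain ⟨u, rfl⟩ := projCyl_surj z
    rw [← hfhat u, ghat_proj, Homeomorph.symm_apply_apply]
  right_inv := by
    intro z
    obtain ⟨u, rfl⟩ := projCyl_surj z
    rw [ghat_proj, ← hfhat, Homeomorph.apply_symm_apply]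
  continuous_toFun := fhat_cont L hfhat
  continuous_invFun := ghat_cont L hfhat

lemma coe_Hhat : ⇑(Hhat L hfhat) = fhat := rfl


omit hfhat in
lemma F_snd_vert (m : ℤ) (u : ℝ × ℝ) :
    (L.F (u + (0, (m : ℝ)))).2 = (L.F u).2 + m := by
  have h1 : ∀ v : ℝ × ℝ, (L.F (v + (0, 1))).2 = (L.F v).2 + 1 := by
    intro v
    have h := L.vert v.1 v.2
    have hv : ((v.1 : ℝ), v.2 + 1) = v + ((0:ℝ), 1) := by
      ext <;> simp only [Prod.fst_add, Prod.snd_add] <;> ring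
    rw [hv] at h
    rw [h]; simp
  have h1' : ∀ v : ℝ × ℝ, (L.F (v + (0, -1))).2 = (L.F v).2 - 1 := by
    intro v
    have h := h1 (v + (0, -1))
    have hv : v + ((0:ℝ), -1) + (0, 1) = v := by
      ext <;> simp only [Prod.fst_add, Prod.snd_add] <;> ring
    rw [hv] at h
    linarith
  induction m using Int.induction_on with
  | zero => simp [Prod.mk_zero_zero]
  | succ k ih =>
      push_cast at ih ⊢
      have e1 : u + ((0:ℝ), (k : ℝ) + 1) = (u + ((0:ℝ), (k : ℝ))) + (0, 1) := by
        ext <;> simp only [Prod.fst_add, Prod.snd_add] <;> ring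
      rw [e1, h1, ih]; ring
  | pred k ih =>
      push_cast at ih ⊢
      have e1 : u + ((0:ℝ), -(k : ℝ) - 1) = (u + ((0:ℝ), -(k : ℝ))) + (0, -1) := by
        ext <;> simp only [Prod.fst_add, Prod.snd_add] <;> ring
      rw [e1, h1', ih]
      ring

omit hfhat in
lemma gdisp_periodic (n m : ℤ) (u : ℝ × ℝ) :
    (L.F (u + ((n : ℝ), (m : ℝ)))).2 - (u + ((n : ℝ), (m : ℝ))).2 = (L.F u).2 - u.2 := by
  have e1 : u + ((n : ℝ), (m : ℝ)) = (u + ((n : ℝ), 0)) + (0, (m : ℝ)) := by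
    ext <;> simp only [Prod.fst_add, Prod.snd_add] <;> ring
  rw [e1, F_snd_vert, F_int]
  simp only [Prod.snd_add]
  ring

/-- Uniform bound on the vertical displacement of `fhat`. -/
lemma disp_bound : ∃ C : ℝ, ∀ z : Cyl, |(fhat z).2 - z.2| ≤ C := by
  set g : ℝ × ℝ → ℝ := fun u => (L.F u).2 - u.2 with hg
  have hgc : Continuous g := (continuous_snd.comp L.F.continuous).sub continuous_snd
  obtain ⟨C, hC⟩ := (isCompact_Icc (a := ((0:ℝ), (0:ℝ))) (b := (1, 1))).exists_bound_of_continuousOn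
    hgc.continuousOn
  refine ⟨C, ?_⟩
  intro z
  obtain ⟨u, rfl⟩ := projCyl_surj z
  have h2 : (fhat (projCyl u)).2 = (L.F u).2 := by rw [← hfhat u]; rfl
  have h3 : (projCyl u).2 = u.2 := rfl
  rw [h2, h3]
  set v : ℝ × ℝ := (Int.fract u.1, Int.fract u.2) with hv
  have huv : u = v + ((⌊u.1⌋ : ℝ), (⌊u.2⌋ : ℝ)) := by
    ext <;> simp only [Prod.fst_add, Prod.snd_add, hv, Int.fract] <;> ring
  have hper : (L.F u).2 - u.2 = g v := by
    rw [huv, gdisp_periodic]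
  rw [hper]
  have hvmem : v ∈ Set.Icc ((0:ℝ), (0:ℝ)) (1, 1) := by
    constructor
    · exact ⟨(Int.fract_nonneg _), (Int.fract_nonneg _)⟩
    · exact ⟨(Int.fract_lt_one _).le, (Int.fract_lt_one _).le⟩
  have := hC v hvmem
  rwa [Real.norm_eq_abs] at this


omit hfhat in
lemma vb_mono {S T : Set Cyl} (h : S ⊆ T) (hT : VBounded T) : VBounded S := by
  obtain ⟨M, hM⟩ := hT
  exact ⟨M, fun z hz => hM z (h hz)⟩

lemma vb_of_image {S : Set Cyl} (h : VBounded (fhat '' S)) : VBounded S := by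
  obtain ⟨C, hC⟩ := disp_bound L hfhat
  obtain ⟨M, hM⟩ := h
  refine ⟨M + C, fun z hz => ?_⟩
  have h1 := hM (fhat z) ⟨z, hz, rfl⟩
  have h2 := hC z
  have : |z.2| ≤ |(fhat z).2| + |(fhat z).2 - z.2| := by
    have := abs_sub_abs_le_abs_sub z.2 (fhat z).2
    have h3 := abs_sub_comm z.2 (fhat z).2
    linarith [abs_sub_abs_le_abs_sub z.2 (fhat z).2, abs_sub_comm (fhat z).2 z.2]
  linarith
lemma vb_of_image_iter (n : ℕ) {S : Set Cyl} (h : VBounded (fhat^[n] '' S)) :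
    VBounded S := by
  induction n generalizing S with
  | zero => simpa using h
  | succ n ih =>
      have h1 : fhat^[n + 1] '' S = fhat^[n] '' (fhat '' S) := by
        rw [← Set.image_comp, ← Function.iterate_succ]
      rw [h1] at h
      exact vb_of_image L hfhat (ih h)

lemma fhat_mem_Bminus {z : Cyl} (hz : z ∈ Bminus fhat) : fhat z ∈ Bminus fhat := by
  intro n
  have := hz (n + 1)
  rwa [Function.iterate_succ_apply] at this

lemma fhat_BS_subset : fhat '' BS fhat ⊆ BS fhat := by
  rintro _ ⟨z, ⟨hzB, hzU⟩, rfl⟩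
  refine ⟨fhat_mem_Bminus L hfhat hzB, ?_⟩
  intro hVB
  apply hzU
  have himg : fhat '' connectedComponentIn (Bminus fhat) z ⊆
      connectedComponentIn (Bminus fhat) (fhat z) := by
    apply IsPreconnected.subset_connectedComponentIn
    · exact isPreconnected_connectedComponentIn.image _ (fhat_cont L hfhat).continuousOn
    · exact ⟨z, mem_connectedComponentIn hzB, rfl⟩
    · rintro _ ⟨w, hw, rfl⟩
      exact fhat_mem_Bminus L hfhat (connectedComponentIn_subset _ _ hw)
  exact vb_of_image L hfhat (vb_mono himg hVB)

lemma iter_BS_subset (n : ℕ) : fhat^[n] '' BS fhat ⊆ BS fhat := by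
  induction n with
  | zero => simp
  | succ n ih =>
      rw [Function.iterate_succ', Set.image_comp]
      exact (Set.image_mono ih).trans (fhat_BS_subset L hfhat)

lemma iter_BS_mono {n i : ℕ} (h : n ≤ i) :
    fhat^[i] '' BS fhat ⊆ fhat^[n] '' BS fhat := by
  obtain ⟨m, rfl⟩ := Nat.exists_eq_add_of_le h
  rw [Function.iterate_add, Set.image_comp]
  exact Set.image_mono (iter_BS_subset L hfhat m)

lemma omega_eq :
    omegaSet fhat (BS fhat) = ⋂ n : ℕ, closure (fhat^[n] '' BS fhat) := by
  unfold omegaSet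
  apply Set.iInter_congr
  intro n
  apply congrArg
  apply Set.Subset.antisymm
  · apply Set.iUnion₂_subset
    intro i hi
    exact iter_BS_mono L hfhat hi
  · intro x hx
    exact Set.mem_iUnion₂.mpr ⟨n, le_rfl, hx⟩


omit hfhat in
lemma omega_closed : IsClosed (omegaSet fhat (BS fhat)) := by
  unfold omegaSet
  exact isClosed_iInter fun n => isClosed_closure

lemma omega_inv : fhat '' omegaSet fhat (BS fhat) = omegaSet fhat (BS fhat) := by
  have hbij : Function.Bijective fhat := (Hhat L hfhat).bijective
  rw [omega_eq L hfhat, Set.image_iInter hbij]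
  have himg : ∀ n : ℕ, fhat '' closure (fhat^[n] '' BS fhat)
      = closure (fhat^[n + 1] '' BS fhat) := by
    intro n
    have h1 := (Hhat L hfhat).image_closure (fhat^[n] '' BS fhat)
    rw [coe_Hhat] at h1
    rw [h1, ← Set.image_comp, ← Function.iterate_succ']
  rw [Set.iInter_congr himg]
  apply Set.Subset.antisymm
  · apply Set.subset_iInter
    intro n
    exact (Set.iInter_subset _ n).trans
      (closure_mono (iter_BS_mono L hfhat (Nat.le_succ n)))
  · exact Set.subset_iInter fun n => Set.iInter_subset _ (n + 1)

lemma omega_unbounded :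
    ∀ z ∈ omegaSet fhat (BS fhat),
      ¬ VBounded (connectedComponentIn (omegaSet fhat (BS fhat)) z) := by
  intro z hz hVB
  haveI : Fact ((0:ℝ) < 1) := ⟨one_pos⟩
  set ω := omegaSet fhat (BS fhat) with hωdef
  obtain ⟨M, hM⟩ := hVB
  set m : ℝ := max M |z.2| + 1 with hm
  have hmM : M < m := by
    have := le_max_left M |z.2|; simp only [hm]; linarith
  have hmz : |z.2| < m := by
    have := le_max_right M |z.2|; simp only [hm]; linarith
  have hm0 : 0 < m := lt_of_le_of_lt (abs_nonneg _) hmz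
  suffices hex : ∃ p ∈ connectedComponentIn ω z, p.2 = -m by
    obtain ⟨p, hp, hpm⟩ := hex
    have h1 := hM p hp
    rw [hpm, abs_neg, abs_of_pos hm0] at h1
    linarith
  by_contra hnot
  push_neg at hnot
  have hωclosed : IsClosed ω := omega_closed
  have homega : ω = ⋂ n, closure (fhat^[n] '' BS fhat) := omega_eq L hfhat
  have hω0 : ∀ p ∈ ω, p.2 ≤ 0 := by
    intro p hp
    have h1 : p ∈ closure (fhat^[0] '' BS fhat) := by
      rw [homega] at hp; exact Set.mem_iInter.mp hp 0
    simp only [Function.iterate_zero, Set.image_id] at h1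
    have hsub : closure (BS fhat) ⊆ {u : Cyl | u.2 ≤ 0} := by
      apply closure_minimal
      · intro u hu
        have := hu.1 0; simpa using this
      · exact isClosed_le continuous_snd continuous_const
    exact hsub h1
  have hz0 : z.2 ≤ 0 := hω0 z hz
  set T : Set Cyl := {u | u.2 ∈ Set.Icc (-m) 0} with hT
  have hTc : IsCompact T := by
    have h : T = (Set.univ : Set (AddCircle (1:ℝ))) ×ˢ Set.Icc (-m) 0 := by
      ext u; simp [hT, Set.mem_prod]
    rw [h]
    exact isCompact_univ.prod isCompact_Icc
  have hTclosed : IsClosed T := by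
    have h : T = Prod.snd ⁻¹' Set.Icc (-m) 0 := rfl
    rw [h]; exact isClosed_Icc.preimage continuous_snd
  have hzT : z ∈ T := ⟨(abs_lt.mp hmz).1.le, hz0⟩
  set K : Set Cyl := ω ∩ T with hKdef
  have hKc : IsCompact K := hTc.inter_left hωclosed
  have hzK : z ∈ K := ⟨hz, hzT⟩
  haveI : CompactSpace K := isCompact_iff_compactSpace.mp hKc
  set x₀ : K := ⟨z, hzK⟩ with hx₀
  set L' : Set K := {x : K | (x : Cyl).2 = -m} with hL'
  have hL'closed : IsClosed L' := by
    have h : L' = (fun x : K => (x : Cyl).2) ⁻¹' {-m} := rfl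
    rw [h]
    exact isClosed_singleton.preimage (continuous_snd.comp continuous_subtype_val)
  have hccL' : connectedComponent x₀ ∩ L' = ∅ := by
    ext q
    simp only [Set.mem_inter_iff, Set.mem_empty_iff_false, iff_false, not_and]
    intro hq1 hq2
    apply hnot (q : Cyl) ?_ hq2
    have h1 : (q : Cyl) ∈ connectedComponentIn K z := by
      rw [connectedComponentIn_eq_image hzK]
      exact ⟨q, hq1, rfl⟩
    exact connectedComponentIn_mono z Set.inter_subset_left h1
  obtain ⟨s₀, hs₀⟩ : ∃ s : {s : Set K // IsClopen s ∧ x₀ ∈ s}, (s : Set K) ∩ L' = ∅ := by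
    by_contra hcon
    push_neg at hcon
    haveI : Nonempty {s : Set K // IsClopen s ∧ x₀ ∈ s} :=
      ⟨⟨Set.univ, isClopen_univ, Set.mem_univ _⟩⟩
    have hne : ∀ s : {s : Set K // IsClopen s ∧ x₀ ∈ s}, ((s : Set K) ∩ L').Nonempty :=
      fun s => hcon s
    have hdir : Directed (· ⊇ ·)
        (fun s : {s : Set K // IsClopen s ∧ x₀ ∈ s} => (s : Set K) ∩ L') := by
      intro s t
      exact ⟨⟨s.1 ∩ t.1, s.2.1.inter t.2.1, ⟨s.2.2, t.2.2⟩⟩,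
        Set.inter_subset_inter_left _ Set.inter_subset_left,
        Set.inter_subset_inter_left _ Set.inter_subset_right⟩
    obtain ⟨q, hq⟩ := IsCompact.nonempty_iInter_of_directed_nonempty_isCompact_isClosed _ hdir hne
      (fun s => (s.2.1.isClosed.inter hL'closed).isCompact)
      (fun s => s.2.1.isClosed.inter hL'closed)
    rw [Set.mem_iInter] at hq
    have hq1 : q ∈ connectedComponent x₀ := by
      rw [connectedComponent_eq_iInter_isClopen x₀, Set.mem_iInter]
      intro s
      exact (hq s).1
    have hq2 : q ∈ L' := (hq ⟨Set.univ, isClopen_univ, Set.mem_univ _⟩).2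
    have : q ∈ connectedComponent x₀ ∩ L' := ⟨hq1, hq2⟩
    rw [hccL'] at this
    exact this
  set K₁ : Set Cyl := Subtype.val '' (s₀ : Set K) with hK₁
  set K₂ : Set Cyl := Subtype.val '' ((s₀ : Set K)ᶜ) with hK₂
  have hK₁c : IsCompact K₁ := (s₀.2.1.isClosed.isCompact).image continuous_subtype_val
  have hK₂c : IsCompact K₂ := (s₀.2.1.compl.isClosed.isCompact).image continuous_subtype_val
  have hdisj : Disjoint K₁ K₂ :=
    (Set.disjoint_image_iff Subtype.val_injective).mpr disjoint_compl_right
  obtain ⟨U, V, hUo, hVo, hK₁U, hK₂V, hUV⟩ := SeparatedNhds.of_isCompact_isCompact hK₁c hK₂c hdisj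
  have hK₁L : ∀ p ∈ K₁, p.2 ≠ -m := by
    rintro _ ⟨a, ha, rfl⟩ hpm
    have h : a ∈ (s₀ : Set K) ∩ L' := ⟨ha, hpm⟩
    rw [hs₀] at h
    exact h
  set U' : Set Cyl := U ∩ {u | -m < u.2} with hU'
  have hU'o : IsOpen U' := hUo.inter (isOpen_lt continuous_const continuous_snd)
  have hK₁U' : K₁ ⊆ U' := by
    intro p hp
    refine ⟨hK₁U hp, ?_⟩
    have hpK : p ∈ K := by
      obtain ⟨a, _, rfl⟩ := hp
      exact a.2
    exact lt_of_le_of_ne hpK.2.1 (Ne.symm (hK₁L p hp))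
  have hKsub : K ⊆ U' ∪ V := by
    intro p hp
    by_cases hcase : (⟨p, hp⟩ : K) ∈ (s₀ : Set K)
    · exact Or.inl (hK₁U' ⟨⟨p, hp⟩, hcase, rfl⟩)
    · exact Or.inr (hK₂V ⟨⟨p, hp⟩, hcase, rfl⟩)
  have hzU' : z ∈ U' := hK₁U' ⟨x₀, s₀.2.2, rfl⟩
  set D : ℕ → Set Cyl := fun n => closure (fhat^[n] '' BS fhat) with hD
  have hDanti : Antitone D := fun a b hab => closure_mono (iter_BS_mono L hfhat hab)
  have hiDK : (⋂ n, D n ∩ T) = K := by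
    rw [← Set.iInter_inter, hKdef, homega]
  obtain ⟨N, hN⟩ : ∃ N, D N ∩ T ⊆ U' ∪ V := by
    by_contra hcon
    push_neg at hcon
    have hne : ∀ n : ℕ, ((D n ∩ T) ∩ (U' ∪ V)ᶜ).Nonempty := by
      intro n
      obtain ⟨p, hp1, hp2⟩ := Set.not_subset.mp (hcon n)
      exact ⟨p, hp1, hp2⟩
    have hdir : Directed (· ⊇ ·) (fun n : ℕ => (D n ∩ T) ∩ (U' ∪ V)ᶜ) := by
      have hanti : Antitone (fun n : ℕ => (D n ∩ T) ∩ (U' ∪ V)ᶜ) := fun a b hab =>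
        Set.inter_subset_inter_left _ (Set.inter_subset_inter_left _ (hDanti hab))
      exact hanti.directed_ge
    obtain ⟨q, hq⟩ := IsCompact.nonempty_iInter_of_directed_nonempty_isCompact_isClosed _ hdir hne
      (fun n => (hTc.inter_left isClosed_closure).inter_right (hU'o.union hVo).isClosed_compl)
      (fun n => (isClosed_closure.inter hTclosed).inter (hU'o.union hVo).isClosed_compl)
    rw [Set.mem_iInter] at hq
    have hqK : q ∈ K := by
      rw [← hiDK, Set.mem_iInter]
      exact fun n => (hq n).1
    exact (hq 0).2 (hKsub hqK)
  have hzDN : z ∈ D N := by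
    rw [homega] at hz
    exact Set.mem_iInter.mp hz N
  obtain ⟨w, hwU', hwBS⟩ : ∃ w, w ∈ U' ∧ w ∈ fhat^[N] '' BS fhat := by
    obtain ⟨w, hw1, hw2⟩ := (_root_.mem_closure_iff.mp hzDN) U' hU'o hzU'
    exact ⟨w, hw1, hw2⟩
  obtain ⟨w₀, hw₀BS, hww₀⟩ := hwBS
  have hC₀BS : connectedComponentIn (Bminus fhat) w₀ ⊆ BS fhat := by
    intro y hy
    refine ⟨connectedComponentIn_subset _ _ hy, ?_⟩
    rw [← connectedComponentIn_eq hy]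
    exact hw₀BS.2
  set C : Set Cyl := fhat^[N] '' connectedComponentIn (Bminus fhat) w₀ with hC
  have hCpre : IsPreconnected C :=
    isPreconnected_connectedComponentIn.image _ ((fhat_cont L hfhat).iterate N).continuousOn
  have hCD : C ⊆ D N := (Set.image_mono hC₀BS).trans subset_closure
  have hCy0 : ∀ c ∈ C, c.2 ≤ 0 := by
    intro c hc
    have h1 : c ∈ BS fhat := iter_BS_subset L hfhat N ((Set.image_mono hC₀BS) hc)
    have := h1.1 0
    simpa using this
  have hwC : w ∈ C := ⟨w₀, mem_connectedComponentIn hw₀BS.1, hww₀⟩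
  have hCunb : ¬ VBounded C := fun h => hw₀BS.2 (vb_of_image_iter L hfhat N h)
  set O₂ : Set Cyl := V ∪ {u | u.2 < -m} with hO₂
  have hO₂o : IsOpen O₂ := hVo.union (isOpen_lt continuous_snd continuous_const)
  have hCcover : C ⊆ U' ∪ O₂ := by
    intro c hc
    by_cases hcm : c.2 < -m
    · exact Or.inr (Or.inr hcm)
    · push_neg at hcm
      have hcT : c ∈ T := ⟨hcm, hCy0 c hc⟩
      rcases hN ⟨hCD hc, hcT⟩ with h | h
      · exact Or.inl h
      · exact Or.inr (Or.inl h)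
  have hCO₂ : (C ∩ O₂).Nonempty := by
    have h' : ¬ ∃ M₂ : ℝ, ∀ c ∈ C, |c.2| ≤ M₂ := hCunb
    push_neg at h'
    obtain ⟨c, hcC, hcm⟩ := h' m
    refine ⟨c, hcC, Or.inr ?_⟩
    have hc0 := hCy0 c hcC
    have he : c.2 = -|c.2| := by rw [abs_of_nonpos hc0]; ring
    simp only [Set.mem_setOf_eq]
    rw [he]
    linarith
  obtain ⟨q, hqC, hqU', hqO₂⟩ := hCpre U' O₂ hU'o hO₂o hCcover ⟨w, hwC, hwU'⟩ hCO₂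
  rcases hqO₂ with hqV | hqm
  · exact (Set.disjoint_left.mp hUV hqU'.1) hqV
  · have h1 : -m < q.2 := hqU'.2
    have h2 : q.2 < -m := hqm
    linarith

end DT

/-- `ω(B_S⁻)` is closed, `f̂`-invariant, and all its connected
components are unbounded. -/
theorem omega_BS_closed_invariant_unbounded_components
    (L : DehnLift) (fhat : Cyl → Cyl)
    (hfhat : ∀ z : ℝ × ℝ, projCyl (L.F z) = fhat (projCyl z)) :
    IsClosed (omegaSet fhat (BS fhat)) ∧
    fhat '' omegaSet fhat (BS fhat) = omegaSet fhat (BS fhat) ∧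
    ∀ z ∈ omegaSet fhat (BS fhat),
      ¬ VBounded (connectedComponentIn (omegaSet fhat (BS fhat)) z) := by
  exact ⟨DT.omega_closed, DT.omega_inv L hfhat, DT.omega_unbounded L hfhat⟩
end
end

section
/- Let f be a homeomorphism of the torus T² homotopic to a Dehn twist, with lift f̂ to the vertical cylinder A. For a lift g of a Dehn twist homeomorphism, write B_S⁻(g) for the union of the unbounded connected components of {ẑ ∈ A : gⁿ(ẑ) ∈ H⁻ for all n ≥ 0}, and ω(B_S⁻(g)) = ∩_{n≥0} closure(∪_{i≥n} gⁱ(B_S⁻(g))). Then ω(B_S⁻(f̂)) = ω(B_S⁻(f̂⁻¹)); i.e., the ω-limit of B_S⁻ computed for f̂ equals the ω-limit of the corresponding set computed for the inverse map f̂⁻¹. -/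
set_option linter.unusedSectionVars false


noncomputable section

open MeasureTheory

section Aux
open Set Function Topology Filter Metric

instance factZeroLtOne : Fact ((0:ℝ) < 1) := ⟨one_pos⟩

namespace DehnAux

lemma disp_bound (F : ℝ × ℝ → ℝ × ℝ) (hc : Continuous F) (c : ℝ)
    (hh : ∀ x y : ℝ, F (x + 1, y) = F (x, y) + (1, 0))
    (hv : ∀ x y : ℝ, F (x, y + 1) = F (x, y) + (c, 1)) :
    ∃ M : ℝ, ∀ z : ℝ × ℝ, |(F z).2 - z.2| ≤ M := by
  set φ : ℝ × ℝ → ℝ := fun z => (F z).2 - z.2 with hφ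
  have hφc : Continuous φ := (continuous_snd.comp hc).sub continuous_snd
  have hper1 : ∀ x y : ℝ, φ (x + 1, y) = φ (x, y) := by
    intro x y; simp only [hφ, hh x y, Prod.snd_add]; ring
  have hper2 : ∀ x y : ℝ, φ (x, y + 1) = φ (x, y) := by
    intro x y; simp only [hφ, hv x y, Prod.snd_add]; ring
  have hper1m : ∀ x y : ℝ, φ (x - 1, y) = φ (x, y) := by
    intro x y; have := hper1 (x - 1) y; rw [sub_add_cancel] at this; exact this.symm
  have hper2m : ∀ x y : ℝ, φ (x, y - 1) = φ (x, y) := by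
    intro x y; have := hper2 x (y - 1); rw [sub_add_cancel] at this; exact this.symm
  have hper1' : ∀ (m : ℤ) (x y : ℝ), φ (x + m, y) = φ (x, y) := by
    intro m
    induction m using Int.induction_on with
    | zero => intro x y; norm_num
    |succ n ih=> intro x y
                 have h1 : x + ((n : ℤ) + 1 : ℤ) = (x + (n:ℤ)) + 1 := by push_cast; ring
                 rw [h1, hper1, ih]
    |pred n ih=> intro x y
                 have h1 : x + (-(n : ℤ) - 1 : ℤ) = (x + (-(n:ℤ) : ℤ)) - 1 := by push_cast; ring
                 rw [h1, hper1m, ih]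
  have hper2' : ∀ (m : ℤ) (x y : ℝ), φ (x, y + m) = φ (x, y) := by
    intro m
    induction m using Int.induction_on with
    | zero => intro x y; norm_num
    |succ n ih=> intro x y
                 have h1 : y + ((n : ℤ) + 1 : ℤ) = (y + (n:ℤ)) + 1 := by push_cast; ring
                 rw [h1, hper2, ih]
    |pred n ih=> intro x y
                 have h1 : y + (-(n : ℤ) - 1 : ℤ) = (y + (-(n:ℤ) : ℤ)) - 1 := by push_cast; ring
                 rw [h1, hper2m, ih]
  have hred : ∀ x y : ℝ, φ (x, y) = φ (Int.fract x, Int.fract y) := by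
    intro x y
    have h1 : φ (x, y) = φ (Int.fract x, y) := by
      have := hper1' ⌊x⌋ (Int.fract x) y
      rw [show Int.fract x + (⌊x⌋ : ℝ) = x by rw [add_comm]; exact Int.floor_add_fract x] at this
      exact this
    have h2 : φ (Int.fract x, y) = φ (Int.fract x, Int.fract y) := by
      have := hper2' ⌊y⌋ (Int.fract x) (Int.fract y)
      rw [show Int.fract y + (⌊y⌋ : ℝ) = y by rw [add_comm]; exact Int.floor_add_fract y] at this
      exact this
    rw [h1, h2]
  obtain ⟨M, hM⟩ := (isCompact_Icc.prod isCompact_Icc :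
      IsCompact ((Icc (0:ℝ) 1) ×ˢ (Icc (0:ℝ) 1))).exists_bound_of_continuousOn
      (hφc.continuousOn)
  refine ⟨M, fun z => ?_⟩
  have : φ z = φ (Int.fract z.1, Int.fract z.2) := hred z.1 z.2
  have hmem : (Int.fract z.1, Int.fract z.2) ∈ (Icc (0:ℝ) 1) ×ˢ (Icc (0:ℝ) 1) := by
    constructor <;> exact ⟨Int.fract_nonneg _, (Int.fract_lt_one _).le⟩
  have := hM _ hmem
  rw [Real.norm_eq_abs] at this
  calc |(F z).2 - z.2| = |φ (Int.fract z.1, Int.fract z.2)| := by rw [← hred z.1 z.2]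
    _ ≤ M := this

end DehnAux
end Aux
section Aux2
open Set Function Topology Filter Metric
namespace DehnAux

lemma projCyl_surjective : Function.Surjective projCyl := by
  rintro ⟨a, y⟩
  obtain ⟨x, rfl⟩ := QuotientAddGroup.mk_surjective a
  exact ⟨(x, y), rfl⟩

lemma projCyl_continuous : Continuous projCyl :=
  (continuous_quotient_mk'.comp continuous_fst).prodMk continuous_snd

lemma projCyl_isOpenMap : IsOpenMap projCyl := by
  have h1 : IsOpenMap ((↑) : ℝ → AddCircle (1:ℝ)) := QuotientAddGroup.isOpenMap_coe
  exact (h1.prodMap IsOpenMap.id)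

lemma projCyl_isQuotientMap : IsQuotientMap projCyl :=
  projCyl_isOpenMap.isQuotientMap projCyl_continuous projCyl_surjective

end DehnAux
end Aux2
section Aux3
open Set Function Topology Filter Metric

lemma VBounded.mono {S T : Set Cyl} (hST : S ⊆ T) (hT : VBounded T) : VBounded S := by
  obtain ⟨M, hM⟩ := hT; exact ⟨M, fun z hz => hM z (hST hz)⟩

namespace DehnAux

structure NicePair (g g' : Cyl → Cyl) : Prop where
  cg : Continuous g
  cg' : Continuous g'
  li : ∀ w, g' (g w) = w
  ri : ∀ w, g (g' w) = w
  bd : ∃ M : ℝ, ∀ w : Cyl, |(g w).2 - w.2| ≤ M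
  bd' : ∃ M : ℝ, ∀ w : Cyl, |(g' w).2 - w.2| ≤ M

namespace NicePair

variable {g g' : Cyl → Cyl} (h : NicePair g g')
include h

protected lemma symm : NicePair g' g := ⟨h.cg', h.cg, h.ri, h.li, h.bd', h.bd⟩

def homeo : Cyl ≃ₜ Cyl where
  toFun := g
  invFun := g'
  left_inv := h.li
  right_inv := h.ri
  continuous_toFun := h.cg
  continuous_invFun := h.cg'

lemma closure_image (A : Set Cyl) : closure (g '' A) = g '' closure A := by
  have := (h.homeo.image_closure A).symm
  exact this

lemma bijective : Function.Bijective g := h.homeo.bijective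

lemma image_unbounded {S : Set Cyl} (hS : ¬ VBounded S) : ¬ VBounded (g '' S) := by
  obtain ⟨M, hM⟩ := h.bd
  rintro ⟨M', hM'⟩
  apply hS
  refine ⟨M' + M, fun w hw => ?_⟩
  have h1 : |(g w).2| ≤ M' := hM' _ ⟨w, hw, rfl⟩
  have h2 : |(g w).2 - w.2| ≤ M := hM w
  have := abs_sub_abs_le_abs_sub w.2 (g w).2
  rw [abs_sub_comm] at this
  linarith [this]

lemma iter_image_unbounded (n : ℕ) {S : Set Cyl} (hS : ¬ VBounded S) :
    ¬ VBounded (g^[n] '' S) := by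
  induction n with
  | zero => simpa using hS
  | succ n ih =>
      rw [Function.iterate_succ', Set.image_comp]
      exact h.image_unbounded ih

lemma mapsTo_Bminus : ∀ z ∈ Bminus g, g z ∈ Bminus g := by
  intro z hz n
  rw [← Function.iterate_succ_apply]
  exact hz (n + 1)

lemma image_BS_subset : g '' BS g ⊆ BS g := by
  rintro _ ⟨z, ⟨hzB, hzU⟩, rfl⟩
  refine ⟨h.mapsTo_Bminus z hzB, fun hb => hzU ?_⟩
  have hsub : g '' connectedComponentIn (Bminus g) z ⊆
      connectedComponentIn (Bminus g) (g z) := by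
    refine IsPreconnected.subset_connectedComponentIn
      (isPreconnected_connectedComponentIn.image _ h.cg.continuousOn) ?_ ?_
    · exact ⟨z, mem_connectedComponentIn hzB, rfl⟩
    · rintro _ ⟨u, hu, rfl⟩
      exact h.mapsTo_Bminus u (connectedComponentIn_subset _ _ hu)
  obtain ⟨M, hM⟩ := hb
  -- g '' comp is VBounded, so comp is VBounded
  by_contra hc
  exact absurd (VBounded.mono hsub ⟨M, hM⟩) (h.image_unbounded hc)

end NicePair
end DehnAux
end Aux3
section Aux4
open Set Function Topology Filter Metric
namespace DehnAux
namespace NicePair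

variable {g g' : Cyl → Cyl} (h : NicePair g g')
include h

lemma iter_inv_iter (m j : ℕ) (u : Cyl) : g'^[m] (g^[m + j] u) = g^[j] u := by
  induction m with
  | zero => simp
  | succ m ih =>
      have e1 : g^[m + 1 + j] u = g (g^[m + j] u) := by
        rw [show m + 1 + j = (m + j) + 1 by ring, Function.iterate_succ_apply']
      rw [e1, Function.iterate_succ_apply, h.li, ih]

lemma inv_iter_self (n : ℕ) (u : Cyl) : g'^[n] (g^[n] u) = u := by
  simpa using h.iter_inv_iter n 0 u

lemma isClosed_Bminus : IsClosed (Bminus g) := by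
  have : Bminus g = ⋂ n : ℕ, (fun z : Cyl => (g^[n] z).2) ⁻¹' (Iic 0) := by
    ext z; simp [Bminus, Set.mem_iInter]
  rw [this]
  exact isClosed_iInter fun n => IsClosed.preimage
    (continuous_snd.comp (h.cg.iterate n)) isClosed_Iic

lemma iter_image_subset (n : ℕ) {S : Set Cyl} (hS : g '' S ⊆ S) : g^[n] '' S ⊆ S := by
  induction n with
  | zero => simp
  | succ n ih =>
      rw [Function.iterate_succ, Set.image_comp]
      exact (Set.image_mono hS).trans ih

lemma omega_eq : omegaSet g (BS g) = ⋂ n : ℕ, g^[n] '' closure (BS g) := by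
  have hfwd : g '' BS g ⊆ BS g := h.image_BS_subset
  have hiter : ∀ n, closure (g^[n] '' BS g) = g^[n] '' closure (BS g) := by
    intro n
    induction n with
    | zero => simp
    | succ n ih =>
        rw [Function.iterate_succ', Set.image_comp, Set.image_comp, h.closure_image, ih]
  unfold omegaSet
  refine Set.iInter_congr fun n => ?_
  have : (⋃ i : ℕ, ⋃ _ : n ≤ i, g^[i] '' BS g) = g^[n] '' BS g := by
    apply Set.Subset.antisymm
    · refine Set.iUnion₂_subset fun i hi => ?_
      have : g^[i] '' BS g = g^[n] '' (g^[i - n] '' BS g) := by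
        rw [← Set.image_comp, ← Function.iterate_add, Nat.add_sub_cancel' hi]
      rw [this]
      exact Set.image_mono (h.iter_image_subset _ hfwd)
    · exact Set.subset_iUnion₂ (s := fun i _ => g^[i] '' BS g) n le_rfl
  rw [this, hiter]

end NicePair
end DehnAux
end Aux4
section Aux5
open Set Function Topology Filter Metric
namespace DehnAux

lemma isCompact_slabCap {B : Set Cyl} (hB : IsClosed B) (R : ℝ) :
    IsCompact (B ∩ {w : Cyl | |w.2| ≤ R}) := by
  have hsub : B ∩ {w : Cyl | |w.2| ≤ R} ⊆ (univ : Set (AddCircle (1:ℝ))) ×ˢ Icc (-R) R := by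
    rintro w ⟨-, hw⟩
    exact ⟨trivial, abs_le.mp hw⟩
  have hcpt : IsCompact ((univ : Set (AddCircle (1:ℝ))) ×ˢ Icc (-R) R) :=
    isCompact_univ.prod isCompact_Icc
  refine hcpt.of_isClosed_subset ?_ hsub
  exact hB.inter (IsClosed.preimage (continuous_snd.abs) isClosed_Iic :
    IsClosed {w : Cyl | |w.2| ≤ R})

/-- If the connected component of `z` in a closed set `B` is vertically bounded, it can be
separated: there is a vertically bounded set `V ∋ z`, compact, open in `B`. -/
lemma exists_clopen_separation {B : Set Cyl} (hB : IsClosed B) {z : Cyl} (hz : z ∈ B)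
    {R : ℝ} (hQb : ∀ w ∈ connectedComponentIn B z, |w.2| ≤ R) :
    ∃ V U' : Set Cyl, IsOpen U' ∧ V = B ∩ U' ∧ z ∈ V ∧ IsCompact V ∧
      ∀ v ∈ V, |v.2| ≤ R + 1 := by
  classical
  set K := B ∩ {w : Cyl | |w.2| ≤ R + 1} with hK
  have hzR : |z.2| ≤ R := hQb z (mem_connectedComponentIn hz)
  have hzK : z ∈ K := ⟨hz, by simp only [mem_setOf_eq]; linarith⟩
  have hKc : IsCompact K := isCompact_slabCap hB (R + 1)
  have hKcl : IsClosed K := hB.inter (IsClosed.preimage (continuous_snd.abs) isClosed_Iic)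
  -- component in K equals component in B
  have hQsub : connectedComponentIn B z ⊆ K := fun w hw =>
    ⟨connectedComponentIn_subset _ _ hw, by simp only [mem_setOf_eq]; linarith [hQb w hw]⟩
  have hKQ : connectedComponentIn K z ⊆ connectedComponentIn B z :=
    IsPreconnected.subset_connectedComponentIn isPreconnected_connectedComponentIn
      (mem_connectedComponentIn hzK) ((connectedComponentIn_subset _ _).trans inter_subset_left)
  haveI : CompactSpace ↥K := isCompact_iff_compactSpace.mp hKc
  set z₀ : ↥K := ⟨z, hzK⟩ with hz₀
  have hcc : connectedComponentIn K z = Subtype.val '' connectedComponent z₀ :=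
    connectedComponentIn_eq_image hzK
  set L : Set ↥K := {x : ↥K | R + 1 ≤ |(x : Cyl).2|} with hL
  have hLcl : IsClosed L := IsClosed.preimage
    ((continuous_snd.comp continuous_subtype_val).abs) isClosed_Ici
  have hLK : IsCompact L := hLcl.isCompact
  have hdisj : L ∩ ⋂ s : { s : Set ↥K // IsClopen s ∧ z₀ ∈ s }, (s : Set ↥K) = ∅ := by
    rw [← connectedComponent_eq_iInter_isClopen z₀]
    ext x
    simp only [mem_inter_iff, mem_empty_iff_false, iff_false, not_and]
    intro hxL hxC
    have : (x : Cyl) ∈ connectedComponentIn B z := hKQ (hcc ▸ ⟨x, hxC, rfl⟩)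
    have := hQb _ this
    have := hxL
    simp only [hL, mem_setOf_eq] at this
    linarith
  obtain ⟨u, hu⟩ := hLK.elim_finite_subfamily_closed _ (fun s => s.2.1.isClosed) hdisj
  set W : Set ↥K := ⋂ i ∈ u, (i : Set ↥K) with hW
  have hz₀W : z₀ ∈ W := by
    simp only [hW, mem_iInter]
    exact fun i _ => i.2.2
  have hWclopen : IsClopen W := by
    constructor
    · exact isClosed_biInter fun i _ => i.2.1.isClosed
    · exact isOpen_biInter_finset fun i _ => i.2.1.isOpen
  have hWlt : ∀ x ∈ W, |(x : Cyl).2| < R + 1 := by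
    intro x hx
    by_contra hc
    have : x ∈ L ∩ ⋂ i ∈ u, (i : Set ↥K) := ⟨by simpa [hL] using not_lt.mp hc, hx⟩
    rw [hu] at this
    exact this
  set V : Set Cyl := Subtype.val '' W with hV
  have hVK : V ⊆ K := by rintro _ ⟨x, -, rfl⟩; exact x.2
  have hVcompact : IsCompact V :=
    (hWclopen.isClosed.isCompact).image continuous_subtype_val
  obtain ⟨U, hUopen, hUW⟩ := isOpen_induced_iff.mp hWclopen.isOpen
  set U' : Set Cyl := U ∩ {v : Cyl | |v.2| < R + 1} with hU'
  have hU'open : IsOpen U' := hUopen.inter (IsOpen.preimage (continuous_snd.abs) isOpen_Iio)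
  refine ⟨V, U', hU'open, ?_, ⟨z₀, hz₀W, rfl⟩, hVcompact, ?_⟩
  · -- V = B ∩ U'
    apply Subset.antisymm
    · rintro _ ⟨x, hxW, rfl⟩
      refine ⟨x.2.1, ?_, hWlt x hxW⟩
      · have : x ∈ Subtype.val ⁻¹' U := by rw [hUW]; exact hxW
        exact this
    · rintro v ⟨hvB, hvU, hvlt⟩
      have hvK : v ∈ K := ⟨hvB, by simp only [mem_setOf_eq]; linarith [le_of_lt (show |v.2| < R+1 from hvlt)]⟩
      refine ⟨⟨v, hvK⟩, ?_, rfl⟩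
      rw [← hUW] at *
      exact hvU
  · rintro _ ⟨x, hxW, rfl⟩
    exact (hWlt x hxW).le

end DehnAux
end Aux5
section Aux6
open Set Function Topology Filter Metric
namespace DehnAux

lemma limit_lemma (B : ℕ → Set Cyl) (hcl : ∀ n, IsClosed (B n))
    (hdec : ∀ {m n : ℕ}, m ≤ n → B n ⊆ B m) (z : Cyl) (hz : z ∈ ⋂ n, B n)
    (C : ℕ → Set Cyl) (hCpre : ∀ n, IsPreconnected (C n)) (hCsub : ∀ n, C n ⊆ B n)
    (hCunb : ∀ n, ¬ VBounded (C n)) (w : ℕ → Cyl) (hw : ∀ n, w n ∈ C n)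
    (hwlim : Filter.Tendsto w Filter.atTop (nhds z)) :
    ¬ VBounded (connectedComponentIn (⋂ n, B n) z) := by
  rintro ⟨R, hR⟩
  set Binf := ⋂ n, B n with hBinf
  have hBinfcl : IsClosed Binf := isClosed_iInter hcl
  obtain ⟨V, U', hU'open, hVeq, hzV, hVcompact, hVbd⟩ :=
    exists_clopen_separation hBinfcl (by exact hz) hR
  -- D := Binf \ V is closed, disjoint from V
  have hDcl : IsClosed (Binf \ V) := by
    have : Binf \ V = Binf \ U' := by rw [hVeq, Set.diff_self_inter]
    rw [this]
    exact hBinfcl.sdiff hU'open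
  have hVD : V ⊆ (Binf \ V)ᶜ := fun v hv hc => hc.2 hv
  obtain ⟨δ, hδpos, hδ⟩ :=
    hVcompact.exists_thickening_subset_open hDcl.isOpen_compl hVD
  set O : Set Cyl := Metric.thickening (δ/2) V with hO
  have hOopen : IsOpen O := Metric.isOpen_thickening
  have hVO : V ⊆ O := Metric.self_subset_thickening (half_pos hδpos) V
  have hclO : closure O ⊆ Metric.thickening δ V := by
    refine (Metric.closure_thickening_subset_cthickening _ _).trans ?_
    exact Metric.cthickening_subset_thickening' hδpos (half_lt_self hδpos) V
  have hclOB : closure O ∩ Binf ⊆ V := by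
    rintro x ⟨hxO, hxB⟩
    by_contra hxV
    exact (hδ (hclO hxO)) ⟨hxB, hxV⟩
  have hObd : ∀ x ∈ closure O, |x.2| ≤ R + 1 + δ := by
    intro x hx
    obtain ⟨v, hvV, hdist⟩ := Metric.mem_thickening_iff.mp (hclO hx)
    have h1 : |v.2| ≤ R + 1 := hVbd v hvV
    have h2 : dist x.2 v.2 ≤ dist x v := by
      rw [Prod.dist_eq]; exact le_max_right _ _
    have h3 : |x.2 - v.2| ≤ δ := by
      rw [← Real.dist_eq]; exact h2.trans hdist.le
    have := abs_sub_abs_le_abs_sub x.2 v.2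
    linarith
  -- eventually w n ∈ O
  have hev : ∀ᶠ n in atTop, w n ∈ O := hwlim.eventually (hOopen.mem_nhds (hVO hzV))
  obtain ⟨N, hN⟩ := Filter.eventually_atTop.mp hev
  -- frontier points
  have hfr : ∀ n, ((C (N + n)) ∩ frontier O).Nonempty := by
    intro n
    by_contra hemp
    rw [Set.not_nonempty_iff_eq_empty] at hemp
    -- then C (N+n) ⊆ O ∪ (closure O)ᶜ
    have hsub : C (N + n) ⊆ O ∪ (closure O)ᶜ := by
      intro x hx
      by_cases hxc : x ∈ closure O
      · left
        by_contra hxO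
        have : x ∈ frontier O := ⟨hxc, by rwa [hOopen.interior_eq]⟩
        exact (Set.eq_empty_iff_forall_notMem.mp hemp x) ⟨hx, this⟩
      · right; exact hxc
    obtain ⟨c, hcC, hclarge⟩ : ∃ c ∈ C (N + n), R + 1 + δ < |c.2| := by
      by_contra hc
      push_neg at hc
      exact hCunb (N + n) ⟨R + 1 + δ, fun v hv => (hc v hv)⟩
    have hcO : c ∈ (closure O)ᶜ := fun hmem => absurd (hObd c hmem) (not_le.mpr hclarge)
    have hwO : w (N + n) ∈ O := hN (N + n) (Nat.le_add_right N n)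
    obtain ⟨x, hx⟩ := (hCpre (N + n)) O (closure O)ᶜ hOopen (isClosed_closure.isOpen_compl)
      hsub ⟨w (N + n), hw (N + n), hwO⟩ ⟨c, hcC, hcO⟩
    exact hx.2.2 (subset_closure hx.2.1)
  -- nested compacta
  set Fr : ℕ → Set Cyl := fun n => B (N + n) ∩ frontier O with hFr
  have hFrcl : ∀ n, IsClosed (Fr n) := fun n => (hcl _).inter isClosed_frontier
  have hFrne : ∀ n, (Fr n).Nonempty := by
    intro n
    obtain ⟨x, hx1, hx2⟩ := hfr n
    exact ⟨x, hCsub _ hx1, hx2⟩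
  have hFrdec : ∀ n, Fr (n + 1) ⊆ Fr n := by
    intro n
    exact Set.inter_subset_inter_left _ (hdec (by omega))
  have hFr0 : IsCompact (Fr 0) := by
    have hfrsub : Fr 0 ⊆ (B (N + 0) ∩ frontier O) := le_rfl
    have : IsCompact (B (N+0) ∩ {w : Cyl | |w.2| ≤ R + 1 + δ}) := isCompact_slabCap (hcl _) _
    refine this.of_isClosed_subset (hFrcl 0) ?_
    rintro x ⟨hx1, hx2⟩
    exact ⟨hx1, hObd x (frontier_subset_closure hx2)⟩
  obtain ⟨x, hx⟩ := IsCompact.nonempty_iInter_of_sequence_nonempty_isCompact_isClosed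
    Fr hFrdec hFrne hFr0 hFrcl
  have hxB : x ∈ Binf := by
    rw [hBinf, Set.mem_iInter]
    intro m
    have : x ∈ Fr m := (Set.mem_iInter.mp hx) m
    exact hdec (Nat.le_add_left m N) this.1
  have hxfr : x ∈ frontier O := ((Set.mem_iInter.mp hx) 0).2
  have hxV : x ∈ V := hclOB ⟨frontier_subset_closure hxfr, hxB⟩
  have : x ∈ O := hVO hxV
  exact hxfr.2 (by rwa [hOopen.interior_eq])

end DehnAux
end Aux6
section Aux7
open Set Function Topology Filter Metric
namespace DehnAux
namespace NicePair

variable {g g' : Cyl → Cyl} (h : NicePair g g')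
include h

lemma closure_iter_image (n : ℕ) :
    closure (g^[n] '' BS g) = g^[n] '' closure (BS g) := by
  induction n with
  | zero => simp
  | succ n ih =>
      rw [Function.iterate_succ', Set.image_comp, Set.image_comp, h.closure_image, ih]

lemma omega_subset : omegaSet g (BS g) ⊆ omegaSet g' (BS g') := by
  classical
  set Cset := ⋂ n : ℕ, g^[n] '' closure (BS g) with hCset
  have hclBsub : closure (BS g) ⊆ Bminus g :=
    closure_minimal (fun z hz => hz.1) h.isClosed_Bminus
  have hgcl : g '' closure (BS g) ⊆ closure (BS g) := by
    rw [← h.closure_image]; exact closure_mono h.image_BS_subset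
  set B : ℕ → Set Cyl := fun n => {u : Cyl | ∀ m ≤ n, (g'^[m] u).2 ≤ 0} with hB
  have hBcl : ∀ n, IsClosed (B n) := by
    intro n
    have : B n = ⋂ m : ℕ, ⋂ _ : m ≤ n, (fun u : Cyl => (g'^[m] u).2) ⁻¹' (Iic 0) := by
      ext u; simp [hB]
    rw [this]
    exact isClosed_iInter fun m => isClosed_iInter fun _ =>
      IsClosed.preimage (continuous_snd.comp (h.cg'.iterate m)) isClosed_Iic
  have hBdec : ∀ {m n : ℕ}, m ≤ n → B n ⊆ B m := by
    intro m n hmn u hu j hj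
    exact hu j (hj.trans hmn)
  have hBinf : (⋂ n, B n) = Bminus g' := by
    ext u
    simp only [Set.mem_iInter, hB, mem_setOf_eq, Bminus, Set.mem_setOf_eq]
    exact ⟨fun hu m => hu m m le_rfl, fun hu n m _ => hu m⟩
  have himgB : ∀ n : ℕ, ∀ u ∈ Bminus g, g^[n] u ∈ B n := by
    intro n u hu m hm
    have heq := h.iter_inv_iter m (n - m) u
    rw [Nat.add_sub_cancel' hm] at heq
    rw [heq]
    exact hu (n - m)
  have hmain : Cset ⊆ BS g' := by
    intro z hzC
    have hzB : z ∈ ⋂ n, B n := by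
      rw [Set.mem_iInter]
      intro n
      obtain ⟨u, hu, rfl⟩ := (Set.mem_iInter.mp hzC) n
      exact himgB n u (hclBsub hu)
    have hchoice : ∀ n : ℕ, ∃ p : Cyl, p ∈ g^[n] '' (BS g) ∧ dist z p < 1/((n:ℝ)+1) := by
      intro n
      have hzcl : z ∈ closure (g^[n] '' BS g) := by
        rw [h.closure_iter_image n]
        exact (Set.mem_iInter.mp hzC) n
      have hpos : (0:ℝ) < 1/((n:ℝ)+1) := by positivity
      obtain ⟨p, hp1, hp2⟩ := Metric.mem_closure_iff.mp hzcl _ hpos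
      exact ⟨p, hp1, hp2⟩
    choose p hpmem hpd using hchoice
    have hex : ∀ n : ℕ, ∃ u, u ∈ BS g ∧ g^[n] u = p n := by
      intro n; obtain ⟨u, hu1, hu2⟩ := hpmem n; exact ⟨u, hu1, hu2⟩
    choose u huBS hup using hex
    set C : ℕ → Set Cyl := fun n => g^[n] '' connectedComponentIn (Bminus g) (u n) with hC
    have hCpre : ∀ n, IsPreconnected (C n) := fun n =>
      isPreconnected_connectedComponentIn.image _ ((h.cg.iterate n).continuousOn)
    have hCsub : ∀ n, C n ⊆ B n := by
      rintro n _ ⟨v, hv, rfl⟩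
      exact himgB n v (connectedComponentIn_subset _ _ hv)
    have hCunb : ∀ n, ¬ VBounded (C n) := fun n =>
      h.iter_image_unbounded n (huBS n).2
    have hwmem : ∀ n, p n ∈ C n := fun n =>
      ⟨u n, mem_connectedComponentIn (huBS n).1, hup n⟩
    have hwlim : Filter.Tendsto p Filter.atTop (nhds z) := by
      rw [tendsto_iff_dist_tendsto_zero]
      apply squeeze_zero (fun n => dist_nonneg) (fun n => ?_) 
        tendsto_one_div_add_atTop_nhds_zero_nat
      rw [dist_comm]
      exact (hpd n).le
    have := limit_lemma B hBcl hBdec z hzB C hCpre hCsub hCunb p hwmem hwlim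
    rw [hBinf] at this
    refine ⟨?_, this⟩
    rw [← hBinf]
    exact hzB
  have hstep : ∀ z ∈ Cset, g z ∈ Cset := by
    intro z hz
    rw [hCset, Set.mem_iInter]
    intro n
    match n with
    | 0 =>
        simp only [Function.iterate_zero, Set.image_id]
        exact hgcl ⟨z, by simpa using (Set.mem_iInter.mp hz) 0, rfl⟩
    | Nat.succ m =>
        rw [Function.iterate_succ', Set.image_comp]
        exact ⟨z, (Set.mem_iInter.mp hz) m, rfl⟩
  have hiter : ∀ (n : ℕ) (z : Cyl), z ∈ Cset → g^[n] z ∈ Cset := by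
    intro n
    induction n with
    | zero => intro z hz; simpa using hz
    | succ m ih =>
        intro z hz
        rw [Function.iterate_succ_apply']
        exact hstep _ (ih z hz)
  rw [h.omega_eq]
  intro z hzC
  rw [omegaSet, Set.mem_iInter]
  intro n
  apply subset_closure
  refine Set.mem_iUnion.mpr ⟨n, Set.mem_iUnion.mpr ⟨le_rfl, ?_⟩⟩
  exact ⟨g^[n] z, hmain (hiter n z hzC), h.inv_iter_self n z⟩

end NicePair
end DehnAux
end Aux7
section Aux8
open Set Function Topology Filter Metric
namespace DehnAux

lemma horiz_sub (L : DehnLift) (x y : ℝ) : L.F (x - 1, y) = L.F (x, y) - (1, 0) := by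
  have h := L.horiz (x - 1) y
  rw [sub_add_cancel] at h
  rw [eq_sub_iff_add_eq, ← h]

lemma horiz_int (L : DehnLift) (m : ℤ) (x y : ℝ) :
    L.F (x + m, y) = L.F (x, y) + ((m : ℝ), 0) := by
  induction m using Int.induction_on with
  | zero => simp
  | succ n ih =>
      have e : x + ((n : ℤ) + 1 : ℤ) = (x + (n:ℤ)) + 1 := by push_cast; ring
      rw [e, L.horiz, ih]
      push_cast
      rw [add_assoc]
      congr 1
      ext <;> simp
  | pred n ih =>
      have e : x + (-(n : ℤ) - 1 : ℤ) = (x + (-(n:ℤ) : ℤ)) - 1 := by push_cast; ring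
      rw [e, horiz_sub, ih]
      push_cast
      rw [sub_eq_add_neg, add_assoc]
      congr 1
      ext <;> simp
      ring

lemma symm_horiz (L : DehnLift) (x y : ℝ) :
    L.F.symm (x + 1, y) = L.F.symm (x, y) + (1, 0) := by
  set a := L.F.symm (x, y) with ha
  have h1 : L.F (a + (1, 0)) = (x + 1, y) := by
    have h2 := L.horiz a.1 a.2
    have e1 : a + (1, 0) = (a.1 + 1, a.2) := by ext <;> simp
    rw [e1, h2, Prod.mk.eta, ha, Homeomorph.apply_symm_apply]
    ext <;> simp
  calc L.F.symm (x + 1, y) = L.F.symm (L.F (a + (1, 0))) := by rw [h1]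
    _ = a + (1, 0) := L.F.symm_apply_apply _

lemma symm_vert (L : DehnLift) (x y : ℝ) :
    L.F.symm (x, y + 1) = L.F.symm (x, y) + (-(L.k : ℝ), 1) := by
  set a := L.F.symm (x, y) with ha
  have h1 : L.F (a + (-(L.k : ℝ), 1)) = (x, y + 1) := by
    have e1 : a + (-(L.k : ℝ), 1) = (a.1 + ((-L.k : ℤ) : ℝ), a.2 + 1) := by
      ext <;> simp
    rw [e1]
    have h2 : L.F (a.1 + ((-L.k : ℤ) : ℝ), a.2 + 1) =
        L.F (a.1, a.2 + 1) + (((-L.k : ℤ) : ℝ), 0) := horiz_int L (-L.k) a.1 (a.2 + 1)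
    rw [h2, L.vert a.1 a.2, Prod.mk.eta, ha, Homeomorph.apply_symm_apply]
    ext <;> push_cast <;> simp
  calc L.F.symm (x, y + 1) = L.F.symm (L.F (a + (-(L.k : ℝ), 1))) := by rw [h1]
    _ = a + (-(L.k : ℝ), 1) := L.F.symm_apply_apply _

lemma nicePair_of_lift (L : DehnLift) (fhat fhatinv : Cyl → Cyl)
    (hfhat : ∀ z : ℝ × ℝ, projCyl (L.F z) = fhat (projCyl z))
    (hfhatinv : ∀ z : ℝ × ℝ, projCyl (L.F.symm z) = fhatinv (projCyl z)) :
    NicePair fhat fhatinv := by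
  constructor
  · rw [projCyl_isQuotientMap.continuous_iff]
    have : fhat ∘ projCyl = projCyl ∘ L.F := funext fun z => (hfhat z).symm
    rw [this]
    exact projCyl_continuous.comp L.F.continuous
  · rw [projCyl_isQuotientMap.continuous_iff]
    have : fhatinv ∘ projCyl = projCyl ∘ L.F.symm := funext fun z => (hfhatinv z).symm
    rw [this]
    exact projCyl_continuous.comp L.F.symm.continuous
  · intro w
    obtain ⟨z, rfl⟩ := projCyl_surjective w
    rw [← hfhat, ← hfhatinv, Homeomorph.symm_apply_apply]
  · intro w
    obtain ⟨z, rfl⟩ := projCyl_surjective w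
    rw [← hfhatinv, ← hfhat, Homeomorph.apply_symm_apply]
  · obtain ⟨M, hM⟩ := disp_bound L.F L.F.continuous (L.k : ℝ) L.horiz L.vert
    refine ⟨M, fun w => ?_⟩
    obtain ⟨z, rfl⟩ := projCyl_surjective w
    rw [← hfhat]
    exact hM z
  · obtain ⟨M, hM⟩ := disp_bound L.F.symm L.F.symm.continuous (-(L.k : ℝ))
      (symm_horiz L) (symm_vert L)
    refine ⟨M, fun w => ?_⟩
    obtain ⟨z, rfl⟩ := projCyl_surjective w
    rw [← hfhatinv]
    exact hM z

end DehnAux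
end Aux8

/-- The ω-limit of `B_S⁻` computed for `f̂` equals the ω-limit of
the corresponding set computed for the inverse map `f̂⁻¹`. -/
theorem omega_BS_eq_omega_BS_inverse
    (L : DehnLift) (fhat fhatinv : Cyl → Cyl)
    (hfhat : ∀ z : ℝ × ℝ, projCyl (L.F z) = fhat (projCyl z))
    (hfhatinv : ∀ z : ℝ × ℝ, projCyl (L.F.symm z) = fhatinv (projCyl z)) :
    omegaSet fhat (BS fhat) = omegaSet fhatinv (BS fhatinv) := by
  have hnp := DehnAux.nicePair_of_lift L fhat fhatinv hfhat hfhatinv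
  exact Set.Subset.antisymm hnp.omega_subset hnp.symm.omega_subset
end
end

section
/- Let f be a homeomorphism of the torus T² homotopic to a Dehn twist, with lift f̂ to the vertical cylinder A and covering map π : ℝ² → A. Every connected component of π⁻¹(ω(B_S⁻)) ⊂ ℝ² is unbounded (not necessarily in the vertical direction). -/
noncomputable section

open MeasureTheory

/-! Auxiliary lemmas -/

open Metric Bornology Set

lemma cont_iterate {X : Type*} [TopologicalSpace X] {f : X → X} (hf : Continuous f) (n : ℕ) :
    Continuous f^[n] := by
  induction n with
  | zero => simpa using continuous_id
  | succ n ih => rw [Function.iterate_succ']; exact hf.comp ih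

lemma DehnLift.horiz_int' (L : DehnLift) (m : ℤ) (p : ℝ × ℝ) :
    L.F (p.1 + (m : ℝ), p.2) = L.F p + ((m : ℝ), 0) := by
  induction m using Int.induction_on with
  | zero => simp
  | succ n ih =>
      push_cast at ih ⊢
      have e1 : p.1 + ((n : ℝ) + 1) = (p.1 + n) + 1 := by ring
      rw [e1, L.horiz, ih]
      rw [add_assoc]
      congr 1
      simp [Prod.ext_iff]
  | pred n ih =>
      push_cast at ih ⊢
      have key := L.horiz (p.1 + (-(n:ℝ) - 1)) p.2
      have e1 : p.1 + (-(n:ℝ) - 1) + 1 = p.1 + -(n:ℝ) := by ring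
      rw [e1, ih] at key
      have : L.F (p.1 + (-(n:ℝ) - 1), p.2) = L.F p + (-(n:ℝ), 0) - (1, 0) := by
        rw [key]; abel
      rw [this]
      simp [Prod.ext_iff]
      ring

lemma DehnLift.horiz_int (L : DehnLift) (m : ℤ) (p : ℝ × ℝ) :
    L.F (p + ((m : ℝ), 0)) = L.F p + ((m : ℝ), 0) := by
  have : (p + ((m : ℝ), 0) : ℝ × ℝ) = (p.1 + (m:ℝ), p.2) := by simp [Prod.ext_iff]
  rw [this, L.horiz_int']

lemma DehnLift.iter_horiz_int (L : DehnLift) (i : ℕ) (m : ℤ) (p : ℝ × ℝ) :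
    (⇑L.F)^[i] (p + ((m : ℝ), 0)) = (⇑L.F)^[i] p + ((m : ℝ), 0) := by
  induction i with
  | zero => simp
  | succ n ih =>
      rw [Function.iterate_succ_apply', Function.iterate_succ_apply', ih, L.horiz_int]

lemma projCyl_add_int (m : ℤ) (p : ℝ × ℝ) : projCyl (p + ((m : ℝ), 0)) = projCyl p := by
  unfold projCyl
  refine Prod.ext ?_ (by simp)
  show ((p.1 + (m : ℝ) : ℝ) : AddCircle (1:ℝ)) = (p.1 : AddCircle (1:ℝ))
  rw [QuotientAddGroup.eq_iff_sub_mem]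
  refine AddSubgroup.mem_zmultiples_iff.mpr ⟨m, ?_⟩
  simp

lemma projCyl_eq_iff {w v : ℝ × ℝ} (h : projCyl w = projCyl v) :
    ∃ m : ℤ, w = v + ((m : ℝ), 0) := by
  obtain ⟨h1, h2⟩ := Prod.ext_iff.mp h
  simp only [projCyl] at h1 h2
  rw [QuotientAddGroup.eq_iff_sub_mem] at h1
  obtain ⟨m, hm⟩ := AddSubgroup.mem_zmultiples_iff.mp h1
  simp only [zsmul_eq_mul, mul_one] at hm
  refine ⟨m, ?_⟩
  have : w.1 = v.1 + (m : ℝ) := by linarith [hm]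
  ext
  · simpa using this
  · simpa using h2

lemma projCyl_continuous : Continuous projCyl :=
  Continuous.prodMk ((AddCircle.continuous_mk' 1).comp continuous_fst) continuous_snd

lemma projCyl_isOpenMap : IsOpenMap projCyl := by
  have : projCyl = Prod.map (QuotientAddGroup.mk : ℝ → AddCircle (1:ℝ)) id := rfl
  rw [this]
  exact (QuotientAddGroup.isOpenMap_coe).prodMap IsOpenMap.id

lemma projCyl_surjective : Function.Surjective projCyl := by
  rintro ⟨a, b⟩
  obtain ⟨x, hx⟩ := QuotientAddGroup.mk_surjective a
  exact ⟨(x, b), by simp [projCyl, hx]⟩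

lemma semiconj_iter (L : DehnLift) (fhat : Cyl → Cyl)
    (hfhat : ∀ z : ℝ × ℝ, projCyl (L.F z) = fhat (projCyl z)) (i : ℕ) (z : ℝ × ℝ) :
    projCyl ((⇑L.F)^[i] z) = fhat^[i] (projCyl z) := by
  induction i with
  | zero => rfl
  | succ n ih =>
      rw [Function.iterate_succ_apply', Function.iterate_succ_apply', hfhat, ih]

lemma Bt_closed (L : DehnLift) (fhat : Cyl → Cyl)
    (hfhat : ∀ z : ℝ × ℝ, projCyl (L.F z) = fhat (projCyl z)) :
    IsClosed (projCyl ⁻¹' Bminus fhat) := by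
  have heq : projCyl ⁻¹' Bminus fhat
      = ⋂ n : ℕ, (fun w : ℝ × ℝ => ((⇑L.F)^[n] w).2) ⁻¹' Set.Iic 0 := by
    ext w
    simp only [Set.mem_preimage, Bminus, Set.mem_setOf_eq, Set.mem_iInter, Set.mem_Iic]
    refine forall_congr' fun n => ?_
    rw [← semiconj_iter L fhat hfhat n w]
    exact Iff.rfl
  rw [heq]
  exact isClosed_iInter fun n =>
    IsClosed.preimage (continuous_snd.comp (cont_iterate L.F.continuous n)) isClosed_Iic

/-- Šura-Bura-type lemma in the plane. -/
lemma suraBura {A : Set (ℝ × ℝ)} (hA : IsClosed A) {x : ℝ × ℝ} (hx : x ∈ A)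
    (hb : Bornology.IsBounded (connectedComponentIn A x)) :
    ∃ U : Set (ℝ × ℝ), IsOpen U ∧ Bornology.IsBounded U ∧ x ∈ U ∧ A ∩ frontier U = ∅ := by
  set C := connectedComponentIn A x with hC
  obtain ⟨R0, hR0⟩ := hb.subset_closedBall 0
  set R : ℝ := R0 + 1 with hRdef
  have hCball : C ⊆ ball (0 : ℝ × ℝ) R := fun c hc =>
    lt_of_le_of_lt (mem_closedBall.mp (hR0 hc)) (by rw [hRdef]; linarith)
  set Y := A ∩ closedBall (0 : ℝ × ℝ) (R + 1) with hYdef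
  have hYc : IsCompact Y :=
    (isCompact_closedBall _ _).of_isClosed_subset (hA.inter Metric.isClosed_closedBall)
      inter_subset_right
  have hxC : x ∈ C := mem_connectedComponentIn hx
  have hCY : C ⊆ Y := fun c hc =>
    ⟨connectedComponentIn_subset A x hc, ball_subset_closedBall.trans
      (closedBall_subset_closedBall (by linarith)) (hCball hc)⟩
  have hxY : x ∈ Y := hCY hxC
  have hCeq : connectedComponentIn Y x = C := by
    apply subset_antisymm (connectedComponentIn_mono x inter_subset_left)
    exact isPreconnected_connectedComponentIn.subset_connectedComponentIn hxC hCY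
  haveI : CompactSpace ↥Y := isCompact_iff_compactSpace.mp hYc
  set x' : ↥Y := ⟨x, hxY⟩ with hx'
  have himg : Subtype.val '' connectedComponent x' = C := by
    rw [← connectedComponentIn_eq_image hxY, hCeq]
  have hcc := connectedComponent_eq_iInter_isClopen x'
  set Z : Set ↥Y := Subtype.val ⁻¹' (ball (0 : ℝ × ℝ) R)ᶜ with hZdef
  have hZclosed : IsClosed Z := (isOpen_ball.isClosed_compl).preimage continuous_subtype_val
  have hZcomp : IsCompact Z := hZclosed.isCompact
  have hZint : Z ∩ ⋂ (s : {s : Set ↥Y // IsClopen s ∧ x' ∈ s}), (s : Set ↥Y) = ∅ := by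
    rw [← hcc]
    ext y
    simp only [mem_inter_iff, mem_empty_iff_false, iff_false, not_and]
    intro hyZ hycc
    have : (y : ℝ × ℝ) ∈ C := himg ▸ ⟨y, hycc, rfl⟩
    exact hyZ (hCball this)
  obtain ⟨t, ht⟩ := hZcomp.elim_finite_subfamily_closed _
    (fun s => s.2.1.isClosed) hZint
  set K' : Set ↥Y := ⋂ s ∈ t, (s : Set ↥Y) with hK'def
  have hK'clopen : IsClopen K' := isClopen_biInter_finset (fun s _ => s.2.1)
  have hxK' : x' ∈ K' := mem_iInter₂.mpr fun s _ => s.2.2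
  set K : Set (ℝ × ℝ) := Subtype.val '' K' with hKdef
  have hxK : x ∈ K := ⟨x', hxK', rfl⟩
  have hKball : K ⊆ ball (0 : ℝ × ℝ) R := by
    rintro _ ⟨y, hy, rfl⟩
    by_contra h
    have : y ∈ Z ∩ ⋂ s ∈ t, (s : Set ↥Y) := ⟨h, hy⟩
    rw [ht] at this
    exact this
  have hKA : K ⊆ A := fun k hk => by
    obtain ⟨y, _, rfl⟩ := hk; exact y.2.1
  have hKcomp : IsCompact K := (hK'clopen.isClosed.isCompact).image continuous_subtype_val
  obtain ⟨V, hVopen, hVK'⟩ := isOpen_induced_iff.mp hK'clopen.isOpen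
  have hKYV : K = Y ∩ V := by rw [hKdef, ← hVK', Subtype.image_preimage_coe]
  set W := V ∩ ball (0 : ℝ × ℝ) R with hWdef
  have hWopen : IsOpen W := hVopen.inter isOpen_ball
  have hKW : K = A ∩ W := by
    apply subset_antisymm
    · intro k hk
      refine ⟨hKA hk, (hKYV ▸ hk).2, hKball hk⟩
    · rintro a ⟨haA, haV, hab⟩
      rw [hKYV]
      have hsub : ball (0:ℝ×ℝ) R ⊆ closedBall 0 (R+1) :=
        ball_subset_closedBall.trans (closedBall_subset_closedBall (by linarith))
      exact ⟨⟨haA, hsub hab⟩, haV⟩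
  have hAKclosed : IsClosed (A \ K) := by
    have : A \ K = A ∩ Wᶜ := by rw [hKW, Set.diff_self_inter, Set.diff_eq]
    rw [this]
    exact hA.inter hWopen.isClosed_compl
  obtain ⟨δ, hδ, hdisj⟩ :=
    (Set.disjoint_sdiff_right (s := K) (t := A)).exists_thickenings hKcomp hAKclosed
  refine ⟨thickening (δ/2) K, isOpen_thickening, hKcomp.isBounded.thickening,
    self_subset_thickening (by linarith) K hxK, ?_⟩
  ext a
  simp only [mem_inter_iff, mem_empty_iff_false, iff_false, not_and]
  intro haA hafr
  rw [isOpen_thickening.frontier_eq] at hafr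
  obtain ⟨hacl, haU⟩ := hafr
  have ha1 : a ∈ thickening δ K :=
    (cthickening_subset_thickening' hδ (by linarith) K)
      (closure_thickening_subset_cthickening _ _ hacl)
  have haK : a ∉ K := fun h => haU (self_subset_thickening (by linarith) K h)
  have ha2 : a ∈ thickening δ (A \ K) := self_subset_thickening hδ _ ⟨haA, haK⟩
  exact (Set.disjoint_left.mp hdisj ha1) ha2

/-- Lifting lemma: lifts of points of `B_S⁻` lie in unbounded components of the
lift of `B⁻`, and these components project into `B_S⁻`. -/
lemma BS_lift (L : DehnLift) (fhat : Cyl → Cyl)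
    (hfhat : ∀ z : ℝ × ℝ, projCyl (L.F z) = fhat (projCyl z))
    {q : ℝ × ℝ} (hq : q ∈ projCyl ⁻¹' BS fhat) :
    ¬ Bornology.IsBounded (connectedComponentIn (projCyl ⁻¹' Bminus fhat) q) ∧
    connectedComponentIn (projCyl ⁻¹' Bminus fhat) q ⊆ projCyl ⁻¹' BS fhat := by
  have hqBS : projCyl q ∈ BS fhat := hq
  set Bt := projCyl ⁻¹' Bminus fhat with hBtdef
  have hBtclosed : IsClosed Bt := Bt_closed L fhat hfhat
  have hqBt : q ∈ Bt := hqBS.1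
  set Ct := connectedComponentIn Bt q with hCtdef
  have hqCt : q ∈ Ct := mem_connectedComponentIn hqBt
  -- the image of Ct lies in the component of projCyl q in Bminus
  have himage : projCyl '' Ct ⊆ connectedComponentIn (Bminus fhat) (projCyl q) := by
    refine IsPreconnected.subset_connectedComponentIn ?_ ⟨q, hqCt, rfl⟩ ?_
    · exact isPreconnected_connectedComponentIn.image _ projCyl_continuous.continuousOn
    · rintro _ ⟨c, hc, rfl⟩
      exact connectedComponentIn_subset Bt q hc
  constructor
  · -- unboundedness
    intro hb
    obtain ⟨U, hUopen, hUb, hqU, hUfr⟩ := suraBura hBtclosed hqBt hb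
    set K := Bt ∩ U with hKdef
    have hKclosure : K = Bt ∩ closure U := by
      apply subset_antisymm (inter_subset_inter_right _ subset_closure)
      rintro a ⟨haBt, hacl⟩
      by_cases haU : a ∈ U
      · exact ⟨haBt, haU⟩
      · exfalso
        have : a ∈ Bt ∩ frontier U := ⟨haBt, by rw [hUopen.frontier_eq]; exact ⟨hacl, haU⟩⟩
        rw [hUfr] at this
        exact this
    have hKcomp : IsCompact K :=
      (hUb.isCompact_closure).of_isClosed_subset
        (hKclosure ▸ hBtclosed.inter isClosed_closure)
        (hKclosure ▸ inter_subset_right)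
    have hπK : projCyl '' K = Bminus fhat ∩ projCyl '' U := by
      apply subset_antisymm
      · rintro _ ⟨a, ⟨haBt, haU⟩, rfl⟩
        exact ⟨haBt, ⟨a, haU, rfl⟩⟩
      · rintro y ⟨hyB, a, haU, rfl⟩
        exact ⟨a, ⟨hyB, haU⟩, rfl⟩
    have hπKcomp : IsCompact (projCyl '' K) := hKcomp.image projCyl_continuous
    have hπKclosed : IsClosed (projCyl '' K) := hπKcomp.isClosed
    set C := connectedComponentIn (Bminus fhat) (projCyl q) with hCdef
    have hCsub : C ⊆ projCyl '' K := by
      by_contra hns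
      have hne : (C ∩ (projCyl '' K)ᶜ).Nonempty := by
        rw [Set.inter_compl_nonempty_iff]; exact hns
      have hcov : C ⊆ projCyl '' U ∪ (projCyl '' K)ᶜ := by
        intro c hc
        by_cases h : c ∈ projCyl '' K
        · exact Or.inl (hπK ▸ h).2
        · exact Or.inr h
      have hq1 : (C ∩ projCyl '' U).Nonempty :=
        ⟨projCyl q, mem_connectedComponentIn hqBS.1, ⟨q, hqU, rfl⟩⟩
      obtain ⟨c, hcC, hc1, hc2⟩ := isPreconnected_connectedComponentIn
        (projCyl '' U) ((projCyl '' K)ᶜ) (projCyl_isOpenMap U hUopen)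
        hπKclosed.isOpen_compl hcov hq1 hne
      exact hc2 (hπK ▸ ⟨connectedComponentIn_subset _ _ hcC, hc1⟩)
    -- compactness gives vertical boundedness, contradiction
    obtain ⟨M, hM⟩ := (hπKcomp.image continuous_snd).isBounded.subset_closedBall 0
    exact hqBS.2 ⟨M, fun z hz => by
      have := hM ⟨z, hCsub hz, rfl⟩
      rwa [mem_closedBall, Real.dist_eq, sub_zero] at this⟩
  · -- component projects into BS
    intro w hw
    have hwBm : projCyl w ∈ Bminus fhat := connectedComponentIn_subset Bt q hw
    refine ⟨hwBm, ?_⟩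
    have hmem : projCyl w ∈ connectedComponentIn (Bminus fhat) (projCyl q) :=
      himage ⟨w, hw, rfl⟩
    rw [← connectedComponentIn_eq hmem]
    exact hqBS.2
/-- Every connected component of `π⁻¹(ω(B_S⁻)) ⊆ ℝ²` is
unbounded. -/
theorem components_of_preimage_omega_BS_unbounded
    (L : DehnLift) (fhat : Cyl → Cyl)
    (hfhat : ∀ z : ℝ × ℝ, projCyl (L.F z) = fhat (projCyl z)) :
    ∀ z ∈ projCyl ⁻¹' omegaSet fhat (BS fhat),
      ¬ Bornology.IsBounded
        (connectedComponentIn (projCyl ⁻¹' omegaSet fhat (BS fhat)) z) := by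
  intro z hz hbdd
  set A := projCyl ⁻¹' omegaSet fhat (BS fhat) with hAdef
  have hAclosed : IsClosed A :=
    (isClosed_iInter fun n => isClosed_closure).preimage projCyl_continuous
  obtain ⟨U, hUopen, hUb, hzU, hUfr⟩ := suraBura hAclosed hz hbdd
  set Sn : ℕ → Set Cyl := fun n => ⋃ i : ℕ, ⋃ _ : n ≤ i, fhat^[i] '' BS fhat with hSndef
  set X : ℕ → Set (ℝ × ℝ) := fun n => closure (projCyl ⁻¹' Sn n) with hXdef
  have hpre : ∀ n, projCyl ⁻¹' closure (Sn n) = X n := fun n =>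
    projCyl_isOpenMap.preimage_closure_eq_closure_preimage projCyl_continuous _
  have hAeq : A = ⋂ n, X n := by
    rw [hAdef]
    show projCyl ⁻¹' (⋂ n : ℕ, closure (Sn n)) = ⋂ n, X n
    rw [Set.preimage_iInter]
    exact Set.iInter_congr hpre
  have hzX : ∀ n, z ∈ X n := by
    have := hAeq ▸ hz
    exact fun n => Set.mem_iInter.mp this n
  -- frontier U is compact
  have hfrcomp : IsCompact (frontier U) :=
    (hUb.isCompact_closure).of_isClosed_subset isClosed_frontier frontier_subset_closure
  -- Sn is antitone, hence X is antitone
  have hSnanti : ∀ {n m : ℕ}, n ≤ m → Sn m ⊆ Sn n := by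
    intro n m hnm y hy
    simp only [hSndef, Set.mem_iUnion] at hy ⊢
    obtain ⟨i, hi, hmem⟩ := hy
    exact ⟨i, hnm.trans hi, hmem⟩
  have hXanti : ∀ {n m : ℕ}, n ≤ m → X m ⊆ X n := fun hnm =>
    closure_mono (Set.preimage_mono (hSnanti hnm))
  -- find N with frontier U ∩ X N = ∅
  have hN : ∃ N, frontier U ∩ X N = ∅ := by
    by_contra hcon
    push_neg at hcon
    have hne : ∀ n, (frontier U ∩ X n).Nonempty := hcon
    have hdir : Directed (· ⊇ ·) (fun n => frontier U ∩ X n) := by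
      intro n m
      exact ⟨max n m, Set.inter_subset_inter_right _ (hXanti (le_max_left n m)),
        Set.inter_subset_inter_right _ (hXanti (le_max_right n m))⟩
    have hcompact : ∀ n, IsCompact (frontier U ∩ X n) := fun n =>
      hfrcomp.inter_right isClosed_closure
    have hclosed : ∀ n, IsClosed (frontier U ∩ X n) := fun n =>
      isClosed_frontier.inter isClosed_closure
    have hnonempty := IsCompact.nonempty_iInter_of_directed_nonempty_isCompact_isClosed
      _ hdir hne hcompact hclosed
    obtain ⟨a, ha⟩ := hnonempty
    have haX : a ∈ ⋂ n, X n := Set.mem_iInter.mpr fun n => (Set.mem_iInter.mp ha n).2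
    have hafr : a ∈ frontier U := (Set.mem_iInter.mp ha 0).1
    have : a ∈ A ∩ frontier U := ⟨hAeq ▸ haX, hafr⟩
    rw [hUfr] at this
    exact this
  obtain ⟨N, hNfr⟩ := hN
  -- find a point of projCyl ⁻¹' Sn N inside U
  obtain ⟨w, hwU, hwS⟩ := mem_closure_iff.mp (hzX N) U hUopen hzU
  -- decompose: projCyl w = fhat^[i] s with s ∈ BS, i ≥ N
  have hwS' : projCyl w ∈ Sn N := hwS
  simp only [hSndef, Set.mem_iUnion] at hwS'
  obtain ⟨i, hiN, s, hsBS, hfs⟩ := hwS'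
  -- lift s to the plane over w
  obtain ⟨s0, hs0⟩ := projCyl_surjective s
  have hsemi : projCyl ((⇑L.F)^[i] s0) = projCyl w := by
    rw [semiconj_iter L fhat hfhat, hs0, hfs]
  obtain ⟨m, hm⟩ := projCyl_eq_iff hsemi.symm
  set q : ℝ × ℝ := s0 + ((m : ℝ), 0) with hqdef
  have hFq : (⇑L.F)^[i] q = w := by
    rw [hqdef, L.iter_horiz_int, ← hm]
  have hqBS : q ∈ projCyl ⁻¹' BS fhat := by
    show projCyl q ∈ BS fhat
    rw [hqdef, projCyl_add_int, hs0]
    exact hsBS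
  -- the unbounded connected set through w
  obtain ⟨hunb, hsubBS⟩ := BS_lift L fhat hfhat hqBS
  set Ct := connectedComponentIn (projCyl ⁻¹' Bminus fhat) q with hCtdef
  have hqCt : q ∈ Ct := mem_connectedComponentIn hqBS.1
  set S : Set (ℝ × ℝ) := (⇑L.F)^[i] '' Ct with hSdef
  have hwmem : w ∈ S := ⟨q, hqCt, hFq⟩
  have hSsub : S ⊆ projCyl ⁻¹' Sn N := by
    rintro _ ⟨c, hc, rfl⟩
    show projCyl ((⇑L.F)^[i] c) ∈ Sn N
    rw [semiconj_iter L fhat hfhat]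
    simp only [hSndef, Set.mem_iUnion]
    exact ⟨i, hiN, projCyl c, hsubBS hc, rfl⟩
  have hSprecon : IsPreconnected S :=
    isPreconnected_connectedComponentIn.image _ (cont_iterate L.F.continuous i).continuousOn
  have hSunb : ¬ Bornology.IsBounded S := by
    intro hSb
    apply hunb
    have hinv : ∀ x : ℝ × ℝ, (⇑L.F.symm)^[i] ((⇑L.F)^[i] x) = x :=
      Function.LeftInverse.iterate L.F.symm_apply_apply i
    have hsub2 : Ct ⊆ (⇑L.F.symm)^[i] '' closure S := fun c hc =>
      ⟨(⇑L.F)^[i] c, subset_closure ⟨c, hc, rfl⟩, hinv c⟩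
    exact (((hSb.isCompact_closure).image
      (cont_iterate L.F.symm.continuous i)).isBounded).subset hsub2
  -- S avoids the frontier of U, contradiction with preconnectedness
  have hScover : S ⊆ U ∪ (closure U)ᶜ := by
    intro c hc
    by_cases hcU : c ∈ U
    · exact Or.inl hcU
    · by_cases hccl : c ∈ closure U
      · exfalso
        have hfr : c ∈ frontier U := by rw [hUopen.frontier_eq]; exact ⟨hccl, hcU⟩
        have : c ∈ frontier U ∩ X N := ⟨hfr, subset_closure (hSsub hc)⟩
        rw [hNfr] at this
        exact this
      · exact Or.inr hccl
  have hne1 : (S ∩ U).Nonempty := ⟨w, hwmem, hwU⟩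
  have hne2 : (S ∩ (closure U)ᶜ).Nonempty := by
    rw [Set.inter_compl_nonempty_iff]
    intro hsub
    exact hSunb ((hUb.closure).subset hsub)
  obtain ⟨c, _, hc1, hc2⟩ := hSprecon U (closure U)ᶜ hUopen isClosed_closure.isOpen_compl
    hScover hne1 hne2
  exact hc2 (subset_closure hc1)
end
end

section
/- Let f be a homeomorphism of the torus T² homotopic to a Dehn twist, with lift f̂ to the vertical cylinder A and covering map π : ℝ² → A. For any connected component Γ̃ of π⁻¹(ω(B_S⁻)) ⊂ ℝ², the complement ℝ² ∖ Γ̃ is connected. -/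
noncomputable section

open MeasureTheory

namespace S11
open Set Topology

/-! ### Algebra of the lift `F` -/

variable (L : DehnLift)

lemma add_pair (z : ℝ × ℝ) (a b : ℝ) : z + (a, b) = (z.1 + a, z.2 + b) := rfl

lemma F_e1 (z : ℝ × ℝ) : L.F (z + (1,0)) = L.F z + (1,0) := by
  have h := L.horiz z.1 z.2
  simpa [add_pair] using h

lemma F_e2 (z : ℝ × ℝ) : L.F (z + (0,1)) = L.F z + ((L.k : ℝ),1) := by
  have h := L.vert z.1 z.2
  simpa [add_pair] using h

lemma F_hm (m : ℤ) (z : ℝ × ℝ) : L.F (z + ((m : ℝ),0)) = L.F z + ((m : ℝ),0) := by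
  induction m using Int.induction_on with
  | zero => simp [Prod.mk_zero_zero]
  | succ n ih =>
      have e : z + (((n:ℝ) + 1), 0) = (z + ((n:ℝ), 0)) + (1, 0) := by
        ext <;> simp <;> try ring
      push_cast at ih ⊢
      rw [e, F_e1, ih]
      ext <;> simp <;> try ring
  | pred n ih =>
      have h1 : (z + ((-(n:ℝ) - 1), 0)) + (1,0) = z + ((-(n:ℝ)), 0) := by
        ext <;> simp <;> try ring
      have h2 := F_e1 L (z + ((-(n:ℝ) - 1), 0))
      rw [h1] at h2
      push_cast at ih ⊢
      have h4 := h2.symm.trans ih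
      have h3 : L.F (z + (-(n:ℝ)-1,0)) = L.F z + (-(n:ℝ),0) - (1,0) := by
        rw [← h4]; abel
      rw [h3]; ext <;> simp [add_pair] <;> try ring

lemma F_vert_k (z : ℝ × ℝ) :
    L.F (z + ((L.k : ℝ),1)) = L.F z + ((L.k : ℝ),1) + ((L.k : ℝ),0) := by
  have h1 : z + ((L.k : ℝ),1) = (z + (0,1)) + ((L.k : ℝ),0) := by
    ext <;> simp
  rw [h1, F_hm, F_e2]

lemma Fsymm_hm (m : ℤ) (u : ℝ × ℝ) :
    L.F.symm (u + ((m : ℝ),0)) = L.F.symm u + ((m : ℝ),0) := by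
  have h2 : L.F (L.F.symm u + ((m : ℝ),0)) = u + ((m : ℝ),0) := by
    rw [F_hm, L.F.apply_symm_apply]
  calc L.F.symm (u + ((m : ℝ),0)) = L.F.symm (L.F (L.F.symm u + ((m : ℝ),0))) := by rw [h2]
    _ = L.F.symm u + ((m : ℝ),0) := L.F.symm_apply_apply _

lemma Fsymm_vert (u : ℝ × ℝ) :
    L.F.symm (u + ((L.k : ℝ),1)) = L.F.symm u + (0,1) := by
  have h2 : L.F (L.F.symm u + (0,1)) = u + ((L.k : ℝ),1) := by
    rw [F_e2, L.F.apply_symm_apply]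
  calc L.F.symm (u + ((L.k : ℝ),1)) = L.F.symm (L.F (L.F.symm u + (0,1))) := by rw [h2]
    _ = L.F.symm u + (0,1) := L.F.symm_apply_apply _

/-! ### Bounded displacement -/

lemma bounded_of_periodic (k : ℝ) (φ : ℝ × ℝ → ℝ) (hc : Continuous φ)
    (h1 : ∀ z, φ (z + (1,0)) = φ z) (h2 : ∀ z, φ (z + (k,1)) = φ z) :
    ∃ C : ℝ, ∀ z, |φ z| ≤ C := by
  have hm : ∀ m : ℤ, ∀ z, φ (z + ((m:ℝ),0)) = φ z := by
    intro m
    induction m using Int.induction_on with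
    | zero => simp
    | succ n ih =>
        intro z
        have e : z + (((n:ℝ)+1), 0) = (z + ((n:ℝ),0)) + (1,0) := by ext <;> simp <;> try ring
        push_cast at ih ⊢
        rw [e, h1, ih]
    | pred n ih =>
        intro z
        have e : z + ((-(n:ℝ)-1), 0) + (1,0) = z + (-(n:ℝ),0) := by ext <;> simp <;> try ring
        push_cast at ih ⊢
        have h5 := h1 (z + ((-(n:ℝ)-1), 0))
        rw [e] at h5
        rw [← h5, ih]
  have hn : ∀ n : ℤ, ∀ z, φ (z + (k * (n:ℝ), (n:ℝ))) = φ z := by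
    intro n
    induction n using Int.induction_on with
    | zero => simp
    | succ n ih =>
        intro z
        have e : z + (k * ((n:ℝ)+1), ((n:ℝ)+1)) = (z + (k * (n:ℝ), (n:ℝ))) + (k,1) := by
          ext <;> simp <;> ring
        push_cast at ih ⊢
        rw [e, h2, ih]
    | pred n ih =>
        intro z
        have e : z + (k * (-(n:ℝ)-1), (-(n:ℝ)-1)) + (k,1) = z + (k * (-(n:ℝ)), -(n:ℝ)) := by
          ext <;> simp <;> ring
        push_cast at ih ⊢
        have h5 := h2 (z + (k * (-(n:ℝ)-1), (-(n:ℝ)-1)))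
        rw [e] at h5
        rw [← h5, ih]
  obtain ⟨C, hC⟩ := (isCompact_Icc.prod isCompact_Icc :
      IsCompact (Icc (0:ℝ) 1 ×ˢ Icc (0:ℝ) 1)).exists_bound_of_continuousOn hc.continuousOn
  refine ⟨C, fun z => ?_⟩
  set n : ℤ := ⌊z.2⌋ with hndef
  set t : ℝ := z.1 - k * (n:ℝ) with htdef
  set m : ℤ := ⌊t⌋ with hmdef
  set w : ℝ × ℝ := (Int.fract t, Int.fract z.2) with hwdef
  have hw : w ∈ Icc (0:ℝ) 1 ×ˢ Icc (0:ℝ) 1 :=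
    ⟨⟨Int.fract_nonneg _, (Int.fract_lt_one _).le⟩,
     ⟨Int.fract_nonneg _, (Int.fract_lt_one _).le⟩⟩
  have hz : z = (w + ((m:ℝ),0)) + (k * (n:ℝ), (n:ℝ)) := by
    have ht : Int.fract t + (m:ℝ) = t := by rw [Int.fract, hmdef]; ring
    have ht2 : Int.fract z.2 + (n:ℝ) = z.2 := by rw [Int.fract, hndef]; ring
    ext
    · show z.1 = Int.fract t + (m:ℝ) + k * (n:ℝ)
      rw [ht, htdef]; ring
    · show z.2 = Int.fract z.2 + 0 + (n:ℝ)
      rw [add_zero, ht2]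
  have heq : φ z = φ w := by
    conv_lhs => rw [hz]
    rw [hn, hm]
  rw [heq]
  simpa using hC w hw

/-- bound for the vertical displacement of `F`. -/
lemma exists_dispF : ∃ C : ℝ, 0 ≤ C ∧ ∀ z : ℝ × ℝ, |(L.F z).2 - z.2| ≤ C := by
  obtain ⟨C, hC⟩ := bounded_of_periodic (L.k : ℝ) (fun z => (L.F z).2 - z.2)
    (((continuous_snd.comp L.F.continuous)).sub continuous_snd)
    (fun z => by rw [F_e1]; simp [add_pair])
    (fun z => by rw [F_vert_k]; simp [add_pair])
  exact ⟨max C 0, le_max_right _ _, fun z => (hC z).trans (le_max_left _ _)⟩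

lemma exists_dispFsymm : ∃ C : ℝ, 0 ≤ C ∧ ∀ z : ℝ × ℝ, |(L.F.symm z).2 - z.2| ≤ C := by
  obtain ⟨C, hC⟩ := bounded_of_periodic (L.k : ℝ) (fun z => (L.F.symm z).2 - z.2)
    (((continuous_snd.comp L.F.symm.continuous)).sub continuous_snd)
    (fun z => by
      have : ((1:ℝ),(0:ℝ)) = (((1:ℤ):ℝ), (0:ℝ)) := by norm_num
      rw [this, Fsymm_hm]; simp [add_pair])
    (fun z => by rw [Fsymm_vert]; simp [add_pair])
  exact ⟨max C 0, le_max_right _ _, fun z => (hC z).trans (le_max_left _ _)⟩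

end S11
namespace S11
open Set Topology

/-! ### The covering map and the induced cylinder map -/

lemma projCyl_surj : Function.Surjective projCyl := by
  intro p
  exact ⟨(p.1.out, p.2), by simp [projCyl, QuotientAddGroup.out_eq']⟩

lemma coe_eq_coe {x y : ℝ} (h : (x : AddCircle (1:ℝ)) = y) : ∃ m : ℤ, x = y + m := by
  rw [QuotientAddGroup.eq_iff_sub_mem] at h
  obtain ⟨m, hm⟩ := AddSubgroup.mem_zmultiples_iff.mp h
  refine ⟨m, ?_⟩
  have : (m:ℝ) * 1 = x - y := by rw [← hm]; simp [zsmul_eq_mul]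
  linarith

lemma projCyl_eq_iff {z w : ℝ × ℝ} : projCyl z = projCyl w ↔ ∃ m : ℤ, z = w + ((m:ℝ), 0) := by
  constructor
  · intro h
    have h1 : (z.1 : AddCircle (1:ℝ)) = w.1 := (Prod.ext_iff.mp h).1
    have h2 : z.2 = w.2 := (Prod.ext_iff.mp h).2
    obtain ⟨m, hm⟩ := coe_eq_coe h1
    exact ⟨m, by ext <;> simp [hm, h2]⟩
  · rintro ⟨m, rfl⟩
    have : ((w.1 + (m:ℝ) : ℝ) : AddCircle (1:ℝ)) = (w.1 : ℝ) := by
      rw [QuotientAddGroup.eq_iff_sub_mem]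
      have : w.1 + (m:ℝ) - w.1 = (m:ℝ) := by ring
      rw [this]
      exact AddSubgroup.mem_zmultiples_iff.mpr ⟨m, by simp [zsmul_eq_mul]⟩
    simp [projCyl, this]

lemma projCyl_continuous : Continuous projCyl :=
  (continuous_quotient_mk'.comp continuous_fst).prodMk continuous_snd

lemma projCyl_isOpenQuotientMap : IsOpenQuotientMap projCyl :=
  (QuotientAddGroup.isOpenQuotientMap_mk (N := AddSubgroup.zmultiples (1:ℝ))).prodMap
    IsOpenQuotientMap.id

section cyl
variable (L : DehnLift) (fhat : Cyl → Cyl)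
  (hfhat : ∀ z : ℝ × ℝ, projCyl (L.F z) = fhat (projCyl z))
include hfhat

lemma fhat_iter (n : ℕ) (z : ℝ × ℝ) :
    fhat^[n] (projCyl z) = projCyl ((⇑L.F)^[n] z) := by
  induction n with
  | zero => simp
  | succ n ih =>
      rw [Function.iterate_succ_apply', Function.iterate_succ_apply', ih, ← hfhat]

omit hfhat in
lemma gcyl_proj (z : ℝ × ℝ) :
    projCyl (L.F.symm ((projCyl z).1.out, (projCyl z).2)) = projCyl (L.F.symm z) := by
  have h : projCyl (((projCyl z).1.out : ℝ), (projCyl z).2) = projCyl z := by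
    simp [projCyl, QuotientAddGroup.out_eq']
  obtain ⟨m, hm⟩ := projCyl_eq_iff.mp h
  rw [hm, Fsymm_hm]
  exact projCyl_eq_iff.mpr ⟨m, rfl⟩

/-- the induced inverse map on the cylinder -/
noncomputable def gcyl : Cyl → Cyl := fun p => projCyl (L.F.symm (p.1.out, p.2))

omit hfhat in
lemma gcyl_projCyl (z : ℝ × ℝ) : gcyl L (projCyl z) = projCyl (L.F.symm z) :=
  gcyl_proj L z

lemma gcyl_fhat (p : Cyl) : gcyl L (fhat p) = p := by
  obtain ⟨z, rfl⟩ := projCyl_surj p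
  rw [← hfhat, gcyl_projCyl, L.F.symm_apply_apply]

lemma fhat_gcyl (p : Cyl) : fhat (gcyl L p) = p := by
  obtain ⟨z, rfl⟩ := projCyl_surj p
  rw [gcyl_projCyl, ← hfhat, L.F.apply_symm_apply]

lemma fhat_cont : Continuous fhat := by
  rw [← projCyl_isOpenQuotientMap.continuous_comp_iff]
  have : fhat ∘ projCyl = projCyl ∘ ⇑L.F := by
    funext z; exact (hfhat z).symm
  rw [this]
  exact projCyl_continuous.comp L.F.continuous

omit hfhat in
lemma gcyl_cont : Continuous (gcyl L) := by
  rw [← projCyl_isOpenQuotientMap.continuous_comp_iff]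
  have : gcyl L ∘ projCyl = projCyl ∘ ⇑L.F.symm := by
    funext z; exact gcyl_projCyl L z
  rw [this]
  exact projCyl_continuous.comp L.F.symm.continuous

lemma fhat_image_eq_preimage (S : Set Cyl) : fhat '' S = gcyl L ⁻¹' S := by
  ext p
  constructor
  · rintro ⟨q, hq, rfl⟩
    simpa [gcyl_fhat L fhat hfhat] using hq
  · intro hp
    exact ⟨gcyl L p, hp, fhat_gcyl L fhat hfhat p⟩

lemma fhat_isClosed_image {S : Set Cyl} (hS : IsClosed S) : IsClosed (fhat '' S) := by
  rw [fhat_image_eq_preimage L fhat hfhat]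
  exact hS.preimage (gcyl_cont L)

lemma fhat_image_closure (S : Set Cyl) : fhat '' closure S = closure (fhat '' S) := by
  apply Subset.antisymm
  · exact image_closure_subset_closure_image (fhat_cont L fhat hfhat)
  · apply closure_minimal (image_mono subset_closure)
    exact fhat_isClosed_image L fhat hfhat isClosed_closure

lemma fhat_inj : Function.Injective fhat :=
  Function.LeftInverse.injective (gcyl_fhat L fhat hfhat)

end cyl

end S11
namespace S11
open Set Topology

section sets
variable (L : DehnLift) (fhat : Cyl → Cyl)
  (hfhat : ∀ z : ℝ × ℝ, projCyl (L.F z) = fhat (projCyl z))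

/-- the sets whose closures intersect to `ω`. -/
def Un (n : ℕ) : Set Cyl := ⋃ i : ℕ, ⋃ _ : n ≤ i, fhat^[i] '' BS fhat

lemma omega_eq : omegaSet fhat (BS fhat) = ⋂ n : ℕ, closure (Un fhat n) := rfl

lemma Bminus_snd {p : Cyl} (hp : p ∈ Bminus fhat) : p.2 ≤ 0 := by
  have := hp 0; simpa using this

include hfhat

lemma Bminus_closed : IsClosed (Bminus fhat) := by
  have : Bminus fhat = ⋂ n : ℕ, (fun p => (fhat^[n] p).2) ⁻¹' (Iic 0) := by
    ext p; simp [Bminus, mem_iInter]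
  rw [this]
  exact isClosed_iInter fun n =>
    IsClosed.preimage (continuous_snd.comp ((fhat_cont L fhat hfhat).iterate n)) isClosed_Iic

omit hfhat in
lemma Bminus_fwd {p : Cyl} (hp : p ∈ Bminus fhat) : fhat p ∈ Bminus fhat := by
  intro n
  have := hp (n+1)
  rwa [Function.iterate_succ_apply] at this

omit hfhat in
lemma Bminus_iter_fwd (i : ℕ) : fhat^[i] '' Bminus fhat ⊆ Bminus fhat := by
  rintro _ ⟨p, hp, rfl⟩
  induction i generalizing p with
  | zero => simpa using hp
  | succ i ih =>
      rw [Function.iterate_succ_apply]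
      exact ih (fhat p) (Bminus_fwd fhat hp)

omit hfhat in
lemma BS_subset_Bminus : BS fhat ⊆ Bminus fhat := fun _ h => h.1

omit hfhat in
lemma Un_subset_Bminus (n : ℕ) : Un fhat n ⊆ Bminus fhat := by
  intro p hp
  simp only [Un, mem_iUnion] at hp
  obtain ⟨i, _, hpi⟩ := hp
  exact Bminus_iter_fwd fhat i (image_mono (BS_subset_Bminus fhat) hpi)

lemma omega_subset_Bminus : omegaSet fhat (BS fhat) ⊆ Bminus fhat := by
  rw [omega_eq]
  refine (iInter_subset _ 0).trans ?_
  exact closure_minimal (Un_subset_Bminus fhat 0) (Bminus_closed L fhat hfhat)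

omit hfhat in
lemma omega_closed : IsClosed (omegaSet fhat (BS fhat)) := by
  rw [omega_eq]; exact isClosed_iInter fun n => isClosed_closure

omit hfhat in
lemma fhat_image_Un_subset (n : ℕ) : fhat '' Un fhat n ⊆ Un fhat n := by
  rintro _ ⟨p, hp, rfl⟩
  simp only [Un, mem_iUnion] at hp ⊢
  obtain ⟨i, hi, q, hq, rfl⟩ := hp
  exact ⟨i+1, le_trans hi (Nat.le_succ i), q, hq, by rw [Function.iterate_succ_apply']⟩

omit hfhat in
lemma Un_succ_subset (n : ℕ) : Un fhat (n+1) ⊆ fhat '' Un fhat n := by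
  rintro _ hp
  simp only [Un, mem_iUnion] at hp
  obtain ⟨i, hi, q, hq, rfl⟩ := hp
  obtain ⟨j, rfl⟩ : ∃ j, i = j + 1 := ⟨i - 1, by omega⟩
  rw [Function.iterate_succ_apply']
  exact ⟨fhat^[j] q, by simp only [Un, mem_iUnion]; exact ⟨j, by omega, q, hq, rfl⟩, rfl⟩

lemma omega_fwd {p : Cyl} (hp : p ∈ omegaSet fhat (BS fhat)) :
    fhat p ∈ omegaSet fhat (BS fhat) := by
  rw [omega_eq] at hp ⊢
  rw [mem_iInter] at hp ⊢
  intro n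
  have h1 : fhat p ∈ fhat '' closure (Un fhat n) := mem_image_of_mem _ (hp n)
  rw [fhat_image_closure L fhat hfhat] at h1
  exact closure_mono (fhat_image_Un_subset fhat n) h1

lemma omega_bwd {p : Cyl} (hp : fhat p ∈ omegaSet fhat (BS fhat)) :
    p ∈ omegaSet fhat (BS fhat) := by
  rw [omega_eq] at hp ⊢
  rw [mem_iInter] at hp ⊢
  intro n
  have h1 : fhat p ∈ closure (Un fhat (n+1)) := hp (n+1)
  have h2 : closure (Un fhat (n+1)) ⊆ closure (fhat '' Un fhat n) :=
    closure_mono (Un_succ_subset fhat n)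
  have h3 : fhat p ∈ fhat '' closure (Un fhat n) := by
    rw [fhat_image_closure L fhat hfhat]
    exact h2 h1
  obtain ⟨q, hq, hq2⟩ := h3
  rwa [← fhat_inj L fhat hfhat hq2]

/-! ### plane-level invariance -/

omit hfhat in
lemma P_closed : IsClosed (projCyl ⁻¹' omegaSet fhat (BS fhat)) :=
  (omega_closed fhat).preimage projCyl_continuous

lemma P_snd {z : ℝ × ℝ} (hz : z ∈ projCyl ⁻¹' omegaSet fhat (BS fhat)) : z.2 ≤ 0 :=
  Bminus_snd fhat (omega_subset_Bminus L fhat hfhat hz)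

lemma F_mapsTo_P {z : ℝ × ℝ} (hz : z ∈ projCyl ⁻¹' omegaSet fhat (BS fhat)) :
    L.F z ∈ projCyl ⁻¹' omegaSet fhat (BS fhat) := by
  have : projCyl (L.F z) = fhat (projCyl z) := hfhat z
  simp only [mem_preimage, this]
  exact omega_fwd L fhat hfhat hz

lemma Fsymm_mapsTo_P {z : ℝ × ℝ} (hz : z ∈ projCyl ⁻¹' omegaSet fhat (BS fhat)) :
    L.F.symm z ∈ projCyl ⁻¹' omegaSet fhat (BS fhat) := by
  apply omega_bwd L fhat hfhat
  rw [← hfhat, L.F.apply_symm_apply]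
  exact hz

lemma F_iter_mapsTo_P (n : ℕ) {z : ℝ × ℝ}
    (hz : z ∈ projCyl ⁻¹' omegaSet fhat (BS fhat)) :
    (⇑L.F)^[n] z ∈ projCyl ⁻¹' omegaSet fhat (BS fhat) := by
  induction n generalizing z with
  | zero => simpa using hz
  | succ n ih =>
      rw [Function.iterate_succ_apply]
      exact ih (F_mapsTo_P L fhat hfhat hz)

lemma Fsymm_iter_mapsTo_P (n : ℕ) {z : ℝ × ℝ}
    (hz : z ∈ projCyl ⁻¹' omegaSet fhat (BS fhat)) :
    (⇑L.F.symm)^[n] z ∈ projCyl ⁻¹' omegaSet fhat (BS fhat) := by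
  induction n generalizing z with
  | zero => simpa using hz
  | succ n ih =>
      rw [Function.iterate_succ_apply]
      exact ih (Fsymm_mapsTo_P L fhat hfhat hz)

/-! ### displacement of iterates -/

omit hfhat in
lemma iter_disp {G : ℝ × ℝ → ℝ × ℝ} {C : ℝ} (hC : ∀ z, |(G z).2 - z.2| ≤ C) :
    ∀ n z, |(G^[n] z).2 - z.2| ≤ n * C := by
  intro n
  induction n with
  | zero => simp
  | succ n ih =>
      intro z
      rw [Function.iterate_succ_apply']
      have h1 := hC (G^[n] z)
      have h2 := ih z
      have := abs_sub_abs_le_abs_sub ((G (G^[n] z)).2 - z.2) ((G^[n] z).2 - z.2)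
      have h3 : |(G (G^[n] z)).2 - z.2| ≤ |(G (G^[n] z)).2 - (G^[n] z).2| + |(G^[n] z).2 - z.2| := by
        have := abs_sub_le ((G (G^[n] z)).2) ((G^[n] z).2) z.2
        simpa using this
      push_cast
      calc |(G (G^[n] z)).2 - z.2| ≤ _ + _ := h3
        _ ≤ C + n * C := add_le_add h1 h2
        _ = (n + 1) * C := by ring

end sets

end S11
namespace S11
open Set Topology

/-! ### Compactness helpers -/

lemma isCompact_cyl {R : ℝ} {S : Set Cyl} (hcl : IsClosed S)
    (hsub : ∀ p ∈ S, -R ≤ p.2 ∧ p.2 ≤ 0) : IsCompact S := by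
  haveI : Fact ((0:ℝ) < 1) := ⟨one_pos⟩
  refine IsCompact.of_isClosed_subset
    ((isCompact_univ (X := AddCircle (1:ℝ))).prod (isCompact_Icc (a := -R) (b := 0))) hcl ?_
  intro p hp
  exact ⟨mem_univ _, (hsub p hp).1, (hsub p hp).2⟩

/-- In a compact T2 space, a connected component disjoint from a compact set is
contained in a clopen set disjoint from it. -/
lemma exists_clopen_disjoint {X : Type*} [TopologicalSpace X] [CompactSpace X] [T2Space X]
    (x : X) (Lset : Set X) (hL : IsCompact Lset) (hdisj : connectedComponent x ∩ Lset = ∅) :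
    ∃ U : Set X, IsClopen U ∧ x ∈ U ∧ U ∩ Lset = ∅ ∧ connectedComponent x ⊆ U := by
  classical
  have hcc := connectedComponent_eq_iInter_isClopen x
  have h0 : Lset ∩ ⋂ (i : {s : Set X // IsClopen s ∧ x ∈ s}), (i : Set X) = ∅ := by
    rw [← hcc, inter_comm]; exact hdisj
  obtain ⟨t, ht⟩ := hL.elim_finite_subfamily_closed
    (fun i : {s : Set X // IsClopen s ∧ x ∈ s} => (i : Set X)) (fun i => i.2.1.1) h0
  refine ⟨⋂ i ∈ t, (i : Set X), isClopen_biInter_finset (fun i _ => i.2.1),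
    mem_iInter₂.mpr (fun i _ => i.2.2), by rw [inter_comm]; exact ht, ?_⟩
  intro y hy
  rw [hcc, mem_iInter] at hy
  exact mem_iInter₂.mpr fun i _ => hy i

/-- Boundary bumping: a closed connected subset of the lower half cylinder
containing a point above level `-R` and a point below level `-R` contains a
connected subset of the band joining the point to the bottom level. -/
lemma reach_bottom {R : ℝ} {D : Set Cyl} (hD : IsPreconnected D) (hDcl : IsClosed D)
    (hDy : ∀ p ∈ D, p.2 ≤ 0) {q₀ : Cyl} (hq₀ : q₀ ∈ D) (hq₀R : -R < q₀.2)
    (hdeep : ∃ d ∈ D, d.2 < -R) :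
    ∃ K : Set Cyl, IsPreconnected K ∧ K ⊆ D ∧ (∀ p ∈ K, -R ≤ p.2) ∧ q₀ ∈ K ∧
      ∃ e ∈ K, e.2 = -R := by
  classical
  set Z : Set Cyl := D ∩ {p | -R ≤ p.2} with hZdef
  have hZcl : IsClosed Z := hDcl.inter (isClosed_le continuous_const continuous_snd)
  have hZcomp : IsCompact Z := isCompact_cyl hZcl (fun p hp => ⟨hp.2, hDy p hp.1⟩)
  haveI : CompactSpace Z := isCompact_iff_compactSpace.mp hZcomp
  set q₀' : Z := ⟨q₀, hq₀, hq₀R.le⟩ with hq₀'def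
  by_cases hex : ∃ e ∈ connectedComponent q₀', (e : Cyl).2 = -R
  · obtain ⟨e, he, heR⟩ := hex
    refine ⟨Subtype.val '' connectedComponent q₀',
      isPreconnected_connectedComponent.image _ continuous_subtype_val.continuousOn,
      ?_, ?_, ⟨q₀', mem_connectedComponent, rfl⟩, ⟨e, mem_image_of_mem _ he, heR⟩⟩
    · rintro _ ⟨p, _, rfl⟩; exact p.2.1
    · rintro _ ⟨p, _, rfl⟩; exact p.2.2
  · exfalso
    push_neg at hex
    set Lb : Set Z := {p : Z | (p : Cyl).2 = -R} with hLbdef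
    have hLbcl : IsClosed Lb :=
      isClosed_eq (continuous_snd.comp continuous_subtype_val) continuous_const
    have hLbcomp : IsCompact Lb := hLbcl.isCompact
    have hdisj : connectedComponent q₀' ∩ Lb = ∅ := by
      ext p; simp only [mem_inter_iff, mem_empty_iff_false, iff_false, not_and]
      intro hp hpL
      exact absurd hpL (hex p hp)
    obtain ⟨U, hUclopen, hq₀U, hULb, hccU⟩ := exists_clopen_disjoint q₀' Lb hLbcomp hdisj
    set V : Set Cyl := Subtype.val '' U with hVdef
    have hVcomp : IsCompact V :=
      (hUclopen.isClosed.isCompact).image continuous_subtype_val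
    have hVcl : IsClosed V := hVcomp.isClosed
    have hVR : ∀ v ∈ V, -R < v.2 := by
      rintro _ ⟨u, hu, rfl⟩
      have hu2 : -R ≤ (u : Cyl).2 := u.2.2
      rcases lt_or_eq_of_le hu2 with h | h
      · exact h
      · exfalso
        have : (u : Z) ∈ U ∩ Lb := ⟨hu, h.symm⟩
        rw [hULb] at this
        exact notMem_empty _ this
    obtain ⟨O', hO'open, hO'⟩ := isOpen_induced_iff.mp hUclopen.isOpen
    set W : Set Cyl := O' ∩ {p | -R < p.2} with hWdef
    have hWopen : IsOpen W := hO'open.inter (isOpen_lt continuous_const continuous_snd)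
    have hWDV : W ∩ D = V := by
      apply Subset.antisymm
      · rintro p ⟨⟨hpO, hpR⟩, hpD⟩
        have hpR' : -R ≤ p.2 := le_of_lt hpR
        have hpZ : p ∈ Z := ⟨hpD, hpR'⟩
        have : (⟨p, hpZ⟩ : Z) ∈ U := by rw [← hO']; exact hpO
        exact ⟨⟨p, hpZ⟩, this, rfl⟩
      · rintro _ ⟨u, hu, rfl⟩
        refine ⟨⟨?_, hVR _ ⟨u, hu, rfl⟩⟩, u.2.1⟩
        have : (u : Z) ∈ Subtype.val ⁻¹' O' := by rw [hO']; exact hu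
        exact this
    obtain ⟨d, hd, hdR⟩ := hdeep
    have hdV : d ∉ V := fun hdv => absurd (hVR d hdv) (by linarith)
    have hq₀V : q₀ ∈ V := ⟨q₀', hq₀U, rfl⟩
    have hcover : D ⊆ W ∪ Vᶜ := by
      intro p hp
      by_cases hpV : p ∈ V
      · left; rw [← hWDV] at hpV; exact hpV.1
      · right; exact hpV
    have h1 : (D ∩ W).Nonempty := ⟨q₀, hq₀, by rw [← hWDV] at hq₀V; exact hq₀V.1⟩
    have h2 : (D ∩ Vᶜ).Nonempty := ⟨d, hd, hdV⟩
    obtain ⟨p, hpD, hpW, hpVc⟩ := hD W Vᶜ hWopen hVcl.isOpen_compl hcover h1 h2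
    exact hpVc (by rw [← hWDV]; exact ⟨hpW, hpD⟩)

end S11
namespace S11
open Set Topology

section main1
variable (L : DehnLift) (fhat : Cyl → Cyl)
  (hfhat : ∀ z : ℝ × ℝ, projCyl (L.F z) = fhat (projCyl z))
include hfhat

lemma fhat_iter_snd {C : ℝ} (hC : ∀ z : ℝ × ℝ, |(L.F z).2 - z.2| ≤ C) (n : ℕ) (p : Cyl) :
    |(fhat^[n] p).2 - p.2| ≤ n * C := by
  obtain ⟨z, rfl⟩ := projCyl_surj p
  rw [fhat_iter L fhat hfhat]
  exact iter_disp hC n z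

/-- Every point of `ω(B_S⁻)` lies in `B_S⁻`: its connected component in `B⁻`
is vertically unbounded. -/
lemma omega_subset_BS {q : Cyl} (hq : q ∈ omegaSet fhat (BS fhat)) : q ∈ BS fhat := by
  classical
  have hqB : q ∈ Bminus fhat := omega_subset_Bminus L fhat hfhat hq
  refine ⟨hqB, ?_⟩
  rintro ⟨M, hM⟩
  obtain ⟨C₁, hC₁0, hC₁⟩ := exists_dispF L
  have hMq : |q.2| ≤ M := hM q (mem_connectedComponentIn hqB)
  set R : ℝ := M + |q.2| + 2 with hRdef
  have hRM : M < R := by have := abs_nonneg q.2; linarith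
  set Y : Set Cyl := Bminus fhat ∩ {p | -R ≤ p.2} with hYdef
  have hYcl : IsClosed Y :=
    (Bminus_closed L fhat hfhat).inter (isClosed_le continuous_const continuous_snd)
  have hYcomp : IsCompact Y := isCompact_cyl hYcl
    (fun p hp => ⟨hp.2, Bminus_snd fhat hp.1⟩)
  haveI : CompactSpace Y := isCompact_iff_compactSpace.mp hYcomp
  have hqY : q ∈ Y := ⟨hqB, by have := neg_abs_le q.2; have := abs_nonneg q.2; simp only [mem_setOf_eq]; linarith⟩
  set q' : Y := ⟨q, hqY⟩ with hq'def
  have hcc_sub : ∀ p ∈ connectedComponent q', -M ≤ (p : Cyl).2 := by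
    intro p hp
    have himg : Subtype.val '' connectedComponent q' ⊆
        connectedComponentIn (Bminus fhat) q := by
      apply IsPreconnected.subset_connectedComponentIn
      · exact isPreconnected_connectedComponent.image _ continuous_subtype_val.continuousOn
      · exact ⟨q', mem_connectedComponent, rfl⟩
      · rintro _ ⟨u, _, rfl⟩; exact u.2.1
    have h1 := hM _ (himg (mem_image_of_mem _ hp))
    have h2 := neg_abs_le (p : Cyl).2
    linarith
  set Lb : Set Y := {p : Y | (p : Cyl).2 = -R} with hLbdef
  have hLbcl : IsClosed Lb :=
    isClosed_eq (continuous_snd.comp continuous_subtype_val) continuous_const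
  have hdisj : connectedComponent q' ∩ Lb = ∅ := by
    ext p
    simp only [mem_inter_iff, mem_empty_iff_false, iff_false, not_and]
    intro hp hpL
    have := hcc_sub p hp
    have : -M ≤ -R := by rw [hpL] at this; exact this
    linarith
  obtain ⟨U, hUclopen, hqU, hULb, _⟩ := exists_clopen_disjoint q' Lb hLbcl.isCompact hdisj
  obtain ⟨O, hOopen, hO⟩ := isOpen_induced_iff.mp hUclopen.isOpen
  have hqO : q ∈ O := by
    have : q' ∈ Subtype.val ⁻¹' O := by rw [hO]; exact hqU
    exact this
  have hq0 : q ∈ closure (Un fhat 0) := by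
    rw [omega_eq, mem_iInter] at hq
    exact hq 0
  set N : Set Cyl := O ∩ {p | q.2 - 1 < p.2} with hNdef
  have hNopen : IsOpen N := hOopen.inter (isOpen_lt continuous_const continuous_snd)
  have hqN : q ∈ N := ⟨hqO, by simp only [mem_setOf_eq]; linarith⟩
  obtain ⟨q₀, hq₀N, hq₀Un⟩ := _root_.mem_closure_iff.mp hq0 N hNopen hqN
  simp only [Un, mem_iUnion] at hq₀Un
  obtain ⟨i, _, wb, hwb, rfl⟩ := hq₀Un
  set q₀ : Cyl := fhat^[i] wb with hq₀def
  set CC : Set Cyl := connectedComponentIn (Bminus fhat) wb with hCCdef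
  set D : Set Cyl := closure (fhat^[i] '' CC) with hDdef
  have hDpre : IsPreconnected D :=
    ((isPreconnected_connectedComponentIn).image _
      (((fhat_cont L fhat hfhat).iterate i).continuousOn)).closure
  have hDcl : IsClosed D := isClosed_closure
  have hDB : D ⊆ Bminus fhat := by
    apply closure_minimal _ (Bminus_closed L fhat hfhat)
    exact (image_mono (connectedComponentIn_subset _ _)).trans (Bminus_iter_fwd fhat i)
  have hDy : ∀ p ∈ D, p.2 ≤ 0 := fun p hp => Bminus_snd fhat (hDB hp)
  have hq₀D : q₀ ∈ D := subset_closure ⟨wb, mem_connectedComponentIn hwb.1, rfl⟩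
  have hq₀R : -R < q₀.2 := by
    have h1 : q.2 - 1 < q₀.2 := hq₀N.2
    have h2 := neg_abs_le q.2
    linarith [hMq, abs_nonneg q.2]
  have hdeep : ∃ d ∈ D, d.2 < -R := by
    have hnb : ¬ VBounded CC := hwb.2
    rw [VBounded] at hnb
    push_neg at hnb
    obtain ⟨p, hpCC, hp⟩ := hnb (R + 1 + i * C₁)
    have hp0 : p.2 ≤ 0 := Bminus_snd fhat (connectedComponentIn_subset _ _ hpCC)
    have hpneg : p.2 < -(R + 1 + i * C₁) := by
      rw [abs_of_nonpos hp0] at hp; linarith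
    refine ⟨fhat^[i] p, subset_closure (mem_image_of_mem _ hpCC), ?_⟩
    have hdisp := fhat_iter_snd L fhat hfhat hC₁ i p
    have := abs_le.mp hdisp
    linarith [this.2]
  obtain ⟨K, hKpre, hKD, hKband, hq₀K, e, heK, heR⟩ :=
    reach_bottom hDpre hDcl hDy hq₀D hq₀R hdeep
  have hKY : K ⊆ Y := fun p hp => ⟨hDB (hKD hp), hKband p hp⟩
  set K' : Set Y := Subtype.val ⁻¹' K with hK'def
  have hvalK' : Subtype.val '' K' = K := by
    rw [Subtype.image_preimage_coe]
    exact inter_eq_self_of_subset_right hKY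
  have hK'pre : IsPreconnected K' := by
    rw [← Topology.IsInducing.subtypeVal.isPreconnected_image (s := K'), hvalK']
    exact hKpre
  have hq₀Y : q₀ ∈ Y := hKY hq₀K
  have hq₀'U : (⟨q₀, hq₀Y⟩ : Y) ∈ U := by
    have : (⟨q₀, hq₀Y⟩ : Y) ∈ Subtype.val ⁻¹' O := hq₀N.1
    rw [hO] at this; exact this
  have hK'U : K' ⊆ U :=
    hK'pre.subset_isClopen hUclopen ⟨⟨q₀, hq₀Y⟩, hq₀K, hq₀'U⟩
  have heY : e ∈ Y := hKY heK
  have hfin : (⟨e, heY⟩ : Y) ∈ U ∩ Lb := ⟨hK'U heK, heR⟩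
  rw [hULb] at hfin
  exact notMem_empty _ hfin

end main1
end S11
namespace S11
open Set Topology

/-! ### Iterates of the lift as homeomorphisms -/

def FIt (L : DehnLift) : ℕ → ((ℝ×ℝ) ≃ₜ (ℝ×ℝ))
  | 0 => Homeomorph.refl _
  | (j+1) => (FIt L j).trans L.F

lemma FIt_coe (L : DehnLift) (j : ℕ) : ⇑(FIt L j) = (⇑L.F)^[j] := by
  induction j with
  | zero => rfl
  | succ j ih =>
      show ⇑((FIt L j).trans L.F) = _
      rw [Function.iterate_succ']
      funext x
      simp [Homeomorph.trans_apply, ih]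

lemma FIt_symm_coe (L : DehnLift) (j : ℕ) : ⇑(FIt L j).symm = (⇑L.F.symm)^[j] := by
  induction j with
  | zero => rfl
  | succ j ih =>
      show ⇑(((FIt L j).trans L.F).symm) = _
      rw [Function.iterate_succ]
      funext x
      simp [Homeomorph.trans_apply, ih]

lemma F_cancel (L : DehnLift) (i : ℕ) (u : ℝ × ℝ) :
    (⇑L.F)^[i] ((⇑L.F.symm)^[i] u) = u := by
  have : Function.LeftInverse (⇑L.F) (⇑L.F.symm) := fun x => L.F.apply_symm_apply x
  exact (this.iterate i) u

lemma F_cancel_le (L : DehnLift) {m i : ℕ} (h : m ≤ i) (u : ℝ × ℝ) :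
    (⇑L.F)^[m] ((⇑L.F.symm)^[i] u) = (⇑L.F.symm)^[i - m] u := by
  have hi : i = m + (i - m) := by omega
  conv_lhs => rw [hi, Function.iterate_add_apply]
  rw [F_cancel]

lemma F_shift (L : DehnLift) {m i : ℕ} (h : i ≤ m) (u : ℝ × ℝ) :
    (⇑L.F)^[m] ((⇑L.F.symm)^[i] u) = (⇑L.F)^[m - i] u := by
  have hm : m = (m - i) + i := by omega
  conv_lhs => rw [hm, Function.iterate_add_apply, F_cancel]

end S11
namespace S11
open Set Topology

lemma closure_comp_in_compl {α : Type*} [TopologicalSpace α] {Γ' : Set α} {w : α}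
    (hw : w ∉ Γ') :
    closure (connectedComponentIn Γ'ᶜ w) ⊆ connectedComponentIn Γ'ᶜ w ∪ Γ' := by
  intro x hx
  by_cases hxΓ : x ∈ Γ'
  · exact Or.inr hxΓ
  · left
    have hpre2 : IsPreconnected (connectedComponentIn Γ'ᶜ w ∪ {x}) :=
      isPreconnected_connectedComponentIn.subset_closure subset_union_left
        (union_subset subset_closure (singleton_subset_iff.mpr hx))
    have hsubc : connectedComponentIn Γ'ᶜ w ∪ {x} ⊆ Γ'ᶜ :=
      union_subset (connectedComponentIn_subset _ _) (singleton_subset_iff.mpr hxΓ)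
    have hmemw : w ∈ connectedComponentIn Γ'ᶜ w ∪ {x} :=
      Or.inl (mem_connectedComponentIn hw)
    exact hpre2.subset_connectedComponentIn hmemw hsubc (Or.inr rfl)

lemma exists_boundary {Γ' : Set (ℝ × ℝ)} (hcl : IsClosed Γ') {w z' : ℝ × ℝ}
    (hw : w ∉ Γ') (hz' : z' ∈ Γ') :
    ∃ b ∈ closure (connectedComponentIn Γ'ᶜ w), b ∈ Γ' := by
  by_contra hno
  push_neg at hno
  have hclsub : closure (connectedComponentIn Γ'ᶜ w) ⊆ connectedComponentIn Γ'ᶜ w :=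
    fun x hx => (closure_comp_in_compl hw hx).resolve_right (hno x hx)
  have hop : IsOpen (connectedComponentIn Γ'ᶜ w) := hcl.isOpen_compl.connectedComponentIn
  have hclop : IsClopen (connectedComponentIn Γ'ᶜ w) :=
    ⟨isClosed_of_closure_subset hclsub, hop⟩
  have hne : (connectedComponentIn Γ'ᶜ w).Nonempty := ⟨w, mem_connectedComponentIn hw⟩
  have huniv := hclop.eq_univ hne
  have : z' ∈ connectedComponentIn Γ'ᶜ w := huniv ▸ mem_univ _
  exact connectedComponentIn_subset _ _ this hz'

end S11
open Set

/-- For any connected component `Γ̃` of `π⁻¹(ω(B_S⁻)) ⊆ ℝ²`, the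
complement `ℝ² ∖ Γ̃` is connected. -/
theorem complement_of_component_of_preimage_omega_BS_connected
    (L : DehnLift) (fhat : Cyl → Cyl)
    (hfhat : ∀ z : ℝ × ℝ, projCyl (L.F z) = fhat (projCyl z)) :
    ∀ z ∈ projCyl ⁻¹' omegaSet fhat (BS fhat),
      IsConnected
        (connectedComponentIn (projCyl ⁻¹' omegaSet fhat (BS fhat)) z)ᶜ := by
  classical
  intro z hz
  set P : Set (ℝ × ℝ) := projCyl ⁻¹' omegaSet fhat (BS fhat) with hPdef
  set Γ : Set (ℝ × ℝ) := connectedComponentIn P z with hΓdef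
  obtain ⟨C₁, hC₁0, hC₁⟩ := S11.exists_dispF L
  obtain ⟨C₂, hC₂0, hC₂⟩ := S11.exists_dispFsymm L
  have hPy : ∀ u, u ∈ P → u.2 ≤ 0 := fun u hu => S11.P_snd L fhat hfhat hu
  have hPcl : IsClosed P := S11.P_closed fhat
  have hΓP : Γ ⊆ P := connectedComponentIn_subset _ _
  have hΓpre : IsPreconnected Γ := isPreconnected_connectedComponentIn
  have hzΓ : z ∈ Γ := mem_connectedComponentIn hz
  have hΓcl : IsClosed Γ := by
    have h1 : closure Γ ⊆ P := closure_minimal hΓP hPcl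
    have h3 : closure Γ ⊆ Γ :=
      hΓpre.closure.subset_connectedComponentIn (subset_closure hzΓ) h1
    exact isClosed_of_closure_subset h3
  set a : ℝ × ℝ := ((0:ℝ), (1:ℝ)) with hadef
  set UHP : Set (ℝ × ℝ) := {u : ℝ × ℝ | 0 < u.2} with hUHPdef
  have hUHPpre : IsPreconnected UHP := by
    have hcx : Convex ℝ UHP := by
      intro x hx y hy s t hs ht hst
      have : 0 < s * x.2 + t * y.2 := by
        rcases eq_or_lt_of_le hs with h | h
        · simp only [← h, zero_mul, zero_add]
          have : t = 1 := by linarith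
          rw [this, one_mul]; exact hy
        · have h1 : 0 ≤ t * y.2 := mul_nonneg ht (le_of_lt hy)
          have h2 : 0 < s * x.2 := mul_pos h hx
          linarith
      exact this
    exact hcx.isPreconnected
  have ha : a ∈ UHP := by norm_num [hadef, hUHPdef]
  have hUHPΓ : ∀ (G : Set (ℝ × ℝ)), G ⊆ P → UHP ⊆ Gᶜ := by
    intro G hG u hu hmem
    exact absurd (hPy u (hG hmem)) (not_le.mpr hu)
  have haΓc : a ∈ Γᶜ := hUHPΓ Γ hΓP ha
  have main : ∀ w ∈ Γᶜ, w ∈ connectedComponentIn Γᶜ a := by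
    intro w hw
    by_contra hcon
    set θ : Set (ℝ × ℝ) := connectedComponentIn Γᶜ w with hθdef
    have hwθ : w ∈ θ := mem_connectedComponentIn hw
    -- Step A: θ avoids the upper half plane
    have hθy : ∀ u ∈ θ, u.2 ≤ 0 := by
      intro u hu
      by_contra hpos
      push_neg at hpos
      have h1 : UHP ⊆ connectedComponentIn Γᶜ u :=
        hUHPpre.subset_connectedComponentIn hpos (hUHPΓ Γ hΓP)
      have h2 : connectedComponentIn Γᶜ u = θ := (connectedComponentIn_eq hu).symm
      have h3 : a ∈ θ := by rw [← h2]; exact h1 ha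
      have h4 : θ = connectedComponentIn Γᶜ a := connectedComponentIn_eq h3
      exact hcon (h4 ▸ hwθ)
    -- Step T: forward iterates of points of θ stay in the lower half plane
    have hT : ∀ j : ℕ, ∀ v ∈ θ, ((⇑L.F)^[j] v).2 ≤ 0 := by
      intro j v hv
      by_contra hpos
      push_neg at hpos
      set h := S11.FIt L j with hhdef
      have hcoe : ⇑h = (⇑L.F)^[j] := S11.FIt_coe L j
      have hscoe : ⇑h.symm = (⇑L.F.symm)^[j] := S11.FIt_symm_coe L j
      have himg : h '' θ = connectedComponentIn ((h '' Γ)ᶜ) (h w) := by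
        rw [hθdef, h.image_connectedComponentIn hw, Homeomorph.image_compl]
      have hΓjP : h '' Γ ⊆ P := by
        rintro _ ⟨x, hx, rfl⟩
        show h x ∈ P
        have : (⇑L.F)^[j] x ∈ P := S11.F_iter_mapsTo_P L fhat hfhat j (hΓP hx)
        rw [← hcoe] at this; exact this
      have hvU : h v ∈ UHP := by
        show 0 < (h v).2
        have : (0:ℝ) < ((⇑L.F)^[j] v).2 := hpos
        rw [← hcoe] at this; exact this
      have h1 : UHP ⊆ connectedComponentIn ((h '' Γ)ᶜ) (h v) :=
        hUHPpre.subset_connectedComponentIn hvU (hUHPΓ _ hΓjP)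
      have h2 : connectedComponentIn ((h '' Γ)ᶜ) (h v) = h '' θ := by
        rw [himg]
        exact (connectedComponentIn_eq (by rw [← himg]; exact mem_image_of_mem _ hv)).symm
      set b : ℝ × ℝ := ((0:ℝ), 1 + (j:ℝ) * C₂) with hbdef
      have hbU : b ∈ UHP := by
        show (0:ℝ) < 1 + (j:ℝ) * C₂
        have : (0:ℝ) ≤ (j:ℝ) * C₂ := mul_nonneg (Nat.cast_nonneg j) hC₂0
        linarith
      have hbθ : b ∈ h '' θ := by rw [← h2]; exact h1 hbU
      obtain ⟨v', hv', hveq⟩ := hbθ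
      have hveq2 : v' = h.symm b := by rw [← hveq]; simp
      have hy : (1:ℝ) ≤ (h.symm b).2 := by
        have hd := S11.iter_disp hC₂ j b
        have hd2 := (abs_le.mp (hd)).1
        have : ⇑h.symm b = (⇑L.F.symm)^[j] b := by rw [hscoe]
        rw [this]
        have hb2 : b.2 = 1 + (j:ℝ) * C₂ := rfl
        linarith
      have := hθy v' hv'
      rw [hveq2] at this
      linarith
    -- Step S: backward iterates of points of θ stay in the lower half plane
    have hS : ∀ j : ℕ, ∀ v ∈ θ, ((⇑L.F.symm)^[j] v).2 ≤ 0 := by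
      intro j v hv
      by_contra hpos
      push_neg at hpos
      set h := (S11.FIt L j).symm with hhdef
      have hcoe : ⇑h = (⇑L.F.symm)^[j] := S11.FIt_symm_coe L j
      have hscoe : ⇑h.symm = (⇑L.F)^[j] := by
        show ⇑(S11.FIt L j).symm.symm = _
        rw [Homeomorph.symm_symm]
        exact S11.FIt_coe L j
      have himg : h '' θ = connectedComponentIn ((h '' Γ)ᶜ) (h w) := by
        rw [hθdef, h.image_connectedComponentIn hw, Homeomorph.image_compl]
      have hΓjP : h '' Γ ⊆ P := by
        rintro _ ⟨x, hx, rfl⟩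
        show h x ∈ P
        have : (⇑L.F.symm)^[j] x ∈ P := S11.Fsymm_iter_mapsTo_P L fhat hfhat j (hΓP hx)
        rw [← hcoe] at this; exact this
      have hvU : h v ∈ UHP := by
        show 0 < (h v).2
        have : (0:ℝ) < ((⇑L.F.symm)^[j] v).2 := hpos
        rw [← hcoe] at this; exact this
      have h1 : UHP ⊆ connectedComponentIn ((h '' Γ)ᶜ) (h v) :=
        hUHPpre.subset_connectedComponentIn hvU (hUHPΓ _ hΓjP)
      have h2 : connectedComponentIn ((h '' Γ)ᶜ) (h v) = h '' θ := by
        rw [himg]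
        exact (connectedComponentIn_eq (by rw [← himg]; exact mem_image_of_mem _ hv)).symm
      set b : ℝ × ℝ := ((0:ℝ), 1 + (j:ℝ) * C₁) with hbdef
      have hbU : b ∈ UHP := by
        show (0:ℝ) < 1 + (j:ℝ) * C₁
        have : (0:ℝ) ≤ (j:ℝ) * C₁ := mul_nonneg (Nat.cast_nonneg j) hC₁0
        linarith
      have hbθ : b ∈ h '' θ := by rw [← h2]; exact h1 hbU
      obtain ⟨v', hv', hveq⟩ := hbθ
      have hveq2 : v' = h.symm b := by rw [← hveq]; simp
      have hy : (1:ℝ) ≤ (h.symm b).2 := by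
        have hd := S11.iter_disp hC₁ j b
        have hd2 := (abs_le.mp (hd)).1
        have : ⇑h.symm b = (⇑L.F)^[j] b := by rw [hscoe]
        rw [this]
        have hb2 : b.2 = 1 + (j:ℝ) * C₁ := rfl
        linarith
      have := hθy v' hv'
      rw [hveq2] at this
      linarith
    -- Step C: θ is contained in P
    have hθP : ∀ u ∈ θ, u ∈ P := by
      intro u hu
      show projCyl u ∈ omegaSet fhat (BS fhat)
      rw [S11.omega_eq, Set.mem_iInter]
      intro n
      apply subset_closure
      set h := (S11.FIt L n).symm with hhdef
      have hcoe : ⇑h = (⇑L.F.symm)^[n] := S11.FIt_symm_coe L n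
      set Γn : Set (ℝ × ℝ) := h '' Γ with hΓndef
      have himg : h '' θ = connectedComponentIn (Γnᶜ) (h w) := by
        rw [hθdef, h.image_connectedComponentIn hw, Homeomorph.image_compl]
      have hΓnP : Γn ⊆ P := by
        rintro _ ⟨x, hx, rfl⟩
        show h x ∈ P
        have : (⇑L.F.symm)^[n] x ∈ P := S11.Fsymm_iter_mapsTo_P L fhat hfhat n (hΓP hx)
        rw [← hcoe] at this; exact this
      have hΓncl : IsClosed Γn := (Homeomorph.isClosed_image h).mpr hΓcl
      have hwΓn : h w ∉ Γn := by
        intro hmem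
        obtain ⟨x, hx, hxe⟩ := hmem
        exact hw (by rwa [h.injective hxe] at hx)
      have hzΓn : h z ∈ Γn := mem_image_of_mem _ hzΓ
      -- the closure of the component stays in component ∪ Γn
      have hsub : closure (h '' θ) ⊆ (h '' θ) ∪ Γn := by
        rw [himg]
        exact S11.closure_comp_in_compl hwΓn
      obtain ⟨b, hbcl, hbΓn⟩ := by
        have := S11.exists_boundary hΓncl hwΓn hzΓn
        rw [← himg] at this
        exact this
      -- points of the closure project into B⁻
      have hclB : ∀ x ∈ closure (h '' θ), projCyl x ∈ Bminus fhat := by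
        intro x hx
        rcases hsub hx with hxθ | hxΓ
        · obtain ⟨v, hvθ, rfl⟩ := hxθ
          intro m
          rw [S11.fhat_iter L fhat hfhat]
          show ((⇑L.F)^[m] (h v)).2 ≤ 0
          have hhv : h v = (⇑L.F.symm)^[n] v := by rw [hcoe]
          rw [hhv]
          rcases le_or_gt m n with hmn | hnm
          · rw [S11.F_cancel_le L hmn]
            exact hS (n - m) v hvθ
          · rw [S11.F_shift L hnm.le]
            exact hT (m - n) v hvθ
        · exact S11.omega_subset_Bminus L fhat hfhat (hΓnP hxΓ)
      have hbP : projCyl b ∈ omegaSet fhat (BS fhat) := hΓnP hbΓn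
      have hbBS := S11.omega_subset_BS L fhat hfhat hbP
      have hθnpre : IsPreconnected (h '' θ) := by
        rw [himg]; exact isPreconnected_connectedComponentIn
      have hconn : IsPreconnected (projCyl '' closure (h '' θ)) :=
        hθnpre.closure.image _ S11.projCyl_continuous.continuousOn
      have hsubcc : projCyl '' closure (h '' θ) ⊆
          connectedComponentIn (Bminus fhat) (projCyl b) := by
        apply hconn.subset_connectedComponentIn (mem_image_of_mem _ hbcl)
        rintro _ ⟨x, hx, rfl⟩
        exact hclB x hx
      have huclosure : h u ∈ closure (h '' θ) := subset_closure (mem_image_of_mem _ hu)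
      have huB : projCyl (h u) ∈ Bminus fhat := hclB _ huclosure
      have huBS : projCyl (h u) ∈ BS fhat := by
        refine ⟨huB, ?_⟩
        have hmem : projCyl (h u) ∈ connectedComponentIn (Bminus fhat) (projCyl b) :=
          hsubcc (mem_image_of_mem _ huclosure)
        rw [← connectedComponentIn_eq hmem]
        exact hbBS.2
      simp only [S11.Un, Set.mem_iUnion]
      refine ⟨n, le_refl n, projCyl (h u), huBS, ?_⟩
      rw [S11.fhat_iter L fhat hfhat]
      have hhu : h u = (⇑L.F.symm)^[n] u := by rw [hcoe]
      rw [hhu, S11.F_cancel]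
    -- Step E: conclude that w ∈ Γ, a contradiction
    have hwΓc' : w ∉ Γ := hw
    obtain ⟨b₀, hb₀cl, hb₀Γ⟩ := S11.exists_boundary hΓcl hwΓc' hzΓ
    have hθpre : IsPreconnected θ := isPreconnected_connectedComponentIn
    have hQpre : IsPreconnected (closure θ ∪ Γ) :=
      IsPreconnected.union b₀ hb₀cl hb₀Γ hθpre.closure hΓpre
    have hQP : closure θ ∪ Γ ⊆ P := by
      apply Set.union_subset _ hΓP
      intro x hx
      rcases S11.closure_comp_in_compl hwΓc' hx with hxθ | hxΓ
      · exact hθP x hxθ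
      · exact hΓP hxΓ
    have hfin : closure θ ∪ Γ ⊆ connectedComponentIn P z :=
      hQpre.subset_connectedComponentIn (Or.inr hzΓ) hQP
    exact hw (hfin (Or.inl (subset_closure hwθ)))
  have heq : Γᶜ = connectedComponentIn Γᶜ a :=
    Set.Subset.antisymm main (connectedComponentIn_subset _ _)
  rw [heq]
  exact isConnected_connectedComponentIn_iff.mpr haΓc
end
end

section
/- Let X be a nonempty compact connected metric space and let f : X → X be a minimal homeomorphism (every f-orbit is dense in X). Then for every integer q ≥ 1, the homeomorphism f^q is also minimal. -/
noncomputable section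

/-- Every integer power of (the underlying equiv of) a homeomorphism is the underlying
map of a homeomorphism. -/
private lemma pow_homeo_exists {X : Type*} [TopologicalSpace X] (f : X ≃ₜ X) :
    ∀ m : ℤ, ∃ h : X ≃ₜ X, ⇑h = ⇑(f.toEquiv ^ m) := by
  intro m
  induction m using Int.induction_on with
  | zero => exact ⟨Homeomorph.refl X, by ext z; simp⟩
  | succ n ih =>
    obtain ⟨h, hh⟩ := ih
    refine ⟨h.trans f, ?_⟩
    ext z
    rw [show ((n : ℤ) + 1) = 1 + (n : ℤ) by ring, zpow_add, zpow_one]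
    simp [hh, Equiv.Perm.mul_apply]
  | pred n ih =>
    obtain ⟨h, hh⟩ := ih
    refine ⟨h.trans f.symm, ?_⟩
    ext z
    rw [show (-(n : ℤ) - 1) = -1 + (-(n : ℤ)) by ring, zpow_add, zpow_neg_one]
    simp only [Homeomorph.trans_apply, hh, Equiv.Perm.mul_apply]
    rfl

/-- If `f` is a minimal homeomorphism of a nonempty compact
connected metric space `X` (every full `f`-orbit is dense), then for every
integer `q ≥ 1` the homeomorphism `f^q` is also minimal. -/
theorem power_of_minimal_is_minimal
    {X : Type*} [MetricSpace X] [CompactSpace X] [ConnectedSpace X] [Nonempty X]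
    (f : X ≃ₜ X)
    (hmin : ∀ x : X, Dense (Set.range fun n : ℤ => (f.toEquiv ^ n) x))
    (q : ℕ) (hq : 1 ≤ q) :
    ∀ x : X, Dense (Set.range fun n : ℤ => ((f.toEquiv ^ q) ^ n) x) := by
  classical
  intro x
  set e : Equiv.Perm X := f.toEquiv with he
  set g : Equiv.Perm X := e ^ q with hg
  choose H hH0 using pow_homeo_exists f
  have hH : ∀ m : ℤ, ⇑(H m) = ⇑(e ^ m) := hH0
  have happ : ∀ (a b : ℤ) (z : X), (e ^ (a + b)) z = (e ^ a) ((e ^ b) z) := by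
    intro a b z; rw [zpow_add]; rfl
  have hgn : ∀ n : ℤ, g ^ n = e ^ ((q : ℤ) * n) := by
    intro n; rw [hg, ← zpow_natCast e q, ← zpow_mul]
  have hcomm : ∀ (a b : ℤ) (z : X), (e ^ a) ((e ^ b) z) = (e ^ b) ((e ^ a) z) := by
    intro a b z; rw [← happ, ← happ, add_comm]
  -- orbits and their closures for `g`
  set orb : X → Set X := fun y => Set.range fun n : ℤ => (g ^ n) y with horb
  set cl : X → Set X := fun y => closure (orb y) with hcl
  have hy_mem : ∀ y, y ∈ cl y := fun y => subset_closure ⟨0, by simp⟩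
  have horbinv : ∀ (y : X) (m : ℤ), ∀ z ∈ orb y, (g ^ m) z ∈ orb y := by
    rintro y m z ⟨n, rfl⟩
    refine ⟨m + n, ?_⟩
    simp only
    rw [hgn (m + n), show (q : ℤ) * (m + n) = (q : ℤ) * m + (q : ℤ) * n by ring,
      happ, ← hgn, ← hgn]
  have hclinv : ∀ (y : X) (m : ℤ), ∀ z ∈ cl y, (g ^ m) z ∈ cl y := by
    intro y m z hz
    have hfun : ∀ w, (H ((q : ℤ) * m)) w = (g ^ m) w := by
      intro w; rw [hgn]; exact congrFun (hH _) w
    have h1 : (H ((q : ℤ) * m)) z ∈ (H ((q : ℤ) * m)) '' closure (orb y) := ⟨z, hz, rfl⟩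
    rw [(H ((q : ℤ) * m)).image_closure] at h1
    have h2 : (H ((q : ℤ) * m)) '' orb y ⊆ orb y := by
      rintro w ⟨u, hu, rfl⟩; rw [hfun]; exact horbinv y m u hu
    have h3 := closure_mono h2 h1
    rw [← hfun z]; exact h3
  -- Zorn: a minimal nonempty closed fully `g`-invariant subset of `cl x`
  set S : Set (Set X) :=
    {A | A.Nonempty ∧ IsClosed A ∧ ∀ m : ℤ, ∀ z ∈ A, (g ^ m) z ∈ A} with hSdef
  have hclS : ∀ y, cl y ∈ S := fun y =>
    ⟨⟨y, hy_mem y⟩, isClosed_closure, fun m z hz => hclinv y m z hz⟩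
  have hzorn : ∀ c ⊆ S, IsChain (· ⊆ ·) c → c.Nonempty →
      ∃ lb ∈ S, ∀ s ∈ c, lb ⊆ s := by
    intro c hcS hchain hcne
    refine ⟨⋂₀ c, ⟨?_, ?_, ?_⟩, fun s hs => Set.sInter_subset_of_mem hs⟩
    · have : Nonempty c := hcne.to_subtype
      have hdir : Directed (· ⊇ ·) (fun A : c => (A : Set X)) := by
        intro A B
        rcases hchain.total A.2 B.2 with h | h
        · exact ⟨A, Set.Subset.refl _, h⟩
        · exact ⟨B, h, Set.Subset.refl _⟩
      have := IsCompact.nonempty_iInter_of_directed_nonempty_isCompact_isClosed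
        (fun A : c => (A : Set X)) hdir (fun A => (hcS A.2).1)
        (fun A => (hcS A.2).2.1.isCompact) (fun A => (hcS A.2).2.1)
      rwa [Set.sInter_eq_iInter]
    · exact isClosed_sInter fun A hA => (hcS hA).2.1
    · intro m z hz
      exact Set.mem_sInter.2 fun A hA => (hcS hA).2.2 m z (hz A hA)
  obtain ⟨M, hMx, hMmin⟩ := zorn_superset_nonempty S hzorn (cl x) (hclS x)
  have hMne : M.Nonempty := hMmin.1.1
  have hMcl : IsClosed M := hMmin.1.2.1
  have hMinv : ∀ m : ℤ, ∀ z ∈ M, (g ^ m) z ∈ M := hMmin.1.2.2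
  -- minimality: the `g`-orbit closure of every point of `M` is all of `M`
  have hCl_eq : ∀ y ∈ M, cl y = M := by
    intro y hy
    have hsub : cl y ⊆ M := by
      apply closure_minimal _ hMcl
      rintro z ⟨n, rfl⟩; exact hMinv n y hy
    exact le_antisymm hsub (hMmin.2 (hclS y) hsub)
  -- the images of M under powers of f
  set Mi : ℕ → Set X := fun i => (H (i : ℤ)) '' M with hMidef
  have hMiClosed : ∀ i : ℕ, IsClosed (Mi i) := fun i => (H (i : ℤ)).isClosedMap M hMcl
  -- each Mi is also a minimal set
  have hMiCl : ∀ (i : ℕ), ∀ z ∈ Mi i, cl z = Mi i := by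
    rintro i z ⟨w, hw, rfl⟩
    have horb_eq : orb ((H (i : ℤ)) w) = (H (i : ℤ)) '' orb w := by
      ext u
      constructor
      · rintro ⟨n, rfl⟩
        refine ⟨(g ^ n) w, ⟨n, rfl⟩, ?_⟩
        simp only
        rw [hH, hgn, hcomm]
      · rintro ⟨u, ⟨n, rfl⟩, rfl⟩
        refine ⟨n, ?_⟩
        simp only
        rw [hH, hgn, hcomm]
    have step1 : cl ((H (i : ℤ)) w) = closure (⇑(H (i : ℤ)) '' orb w) := by
      show closure (orb ((H (i : ℤ)) w)) = _
      rw [horb_eq]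
    rw [step1, ← (H (i : ℤ)).image_closure]
    show ⇑(H (i : ℤ)) '' closure (orb w) = Mi i
    have h2 : closure (orb w) = M := hCl_eq w hw
    rw [h2]
  -- the Mi, i < q, cover X
  have hcover : (⋃ i ∈ Finset.range q, Mi i) = Set.univ := by
    obtain ⟨y, hy⟩ := hMne
    have hU_closed : IsClosed (⋃ i ∈ Finset.range q, Mi i) := by
      apply Set.Finite.isClosed_biUnion (Finset.range q).finite_toSet
      intro i _
      exact hMiClosed i
    have hq0 : (0 : ℤ) < (q : ℤ) := by exact_mod_cast hq
    have hrange : (Set.range fun n : ℤ => (e ^ n) y) ⊆ ⋃ i ∈ Finset.range q, Mi i := by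
      rintro z ⟨n, rfl⟩
      have hr0 : 0 ≤ n % (q : ℤ) := Int.emod_nonneg n (by omega)
      have hrq : n % (q : ℤ) < (q : ℤ) := Int.emod_lt_of_pos n hq0
      have hn : n = n % (q : ℤ) + (q : ℤ) * (n / (q : ℤ)) := (Int.emod_add_mul_ediv n (q : ℤ)).symm
      simp only [Set.mem_iUnion, Finset.mem_range, exists_prop]
      refine ⟨(n % (q : ℤ)).toNat, by omega, (g ^ (n / (q : ℤ))) y, hMinv _ y hy, ?_⟩
      rw [hH, hgn, Int.toNat_of_nonneg hr0, ← happ, ← hn]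
    apply Set.eq_univ_of_univ_subset
    calc Set.univ = closure (Set.range fun n : ℤ => (e ^ n) y) := (hmin y).closure_eq.symm
      _ ⊆ ⋃ i ∈ Finset.range q, Mi i := closure_minimal hrange hU_closed
  -- M is open: its complement is the union of the Mi disjoint from M
  have hMopen : IsOpen M := by
    have hcompl : Mᶜ = ⋃ i ∈ (Finset.range q).filter (fun i => ¬ (Mi i ∩ M).Nonempty), Mi i := by
      ext z
      simp only [Set.mem_compl_iff, Set.mem_iUnion, Finset.mem_filter, Finset.mem_range,
        exists_prop]
      constructor
      · intro hz
        have hzU : z ∈ ⋃ i ∈ Finset.range q, Mi i := hcover ▸ Set.mem_univ z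
        simp only [Set.mem_iUnion, Finset.mem_range, exists_prop] at hzU
        obtain ⟨i, hi, hzi⟩ := hzU
        refine ⟨i, ⟨hi, ?_⟩, hzi⟩
        rintro ⟨w, hw1, hw2⟩
        have : Mi i = M := by rw [← hMiCl i w hw1, hCl_eq w hw2]
        exact hz (this ▸ hzi)
      · rintro ⟨i, ⟨hi, hdisj⟩, hzi⟩ hzM
        exact hdisj ⟨z, hzi, hzM⟩
    rw [← isClosed_compl_iff, hcompl]
    apply Set.Finite.isClosed_biUnion (Finset.finite_toSet _)
    intro i _
    exact hMiClosed i
  have hMuniv : M = Set.univ := IsClopen.eq_univ ⟨hMcl, hMopen⟩ hMne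
  have hfinal : cl x = Set.univ := Set.eq_univ_of_univ_subset (hMuniv ▸ hMx)
  rw [dense_iff_closure_eq]
  exact hfinal
end
end

section
/- Let f be a homeomorphism of the torus T² homotopic to a Dehn twist, with lift f̂ to the vertical cylinder A. The vertical rotation set ρ_V(f̂) is a nonempty compact interval of ℝ: there exist real numbers a ≤ b with ρ_V(f̂) = [a, b]. -/
noncomputable section

open MeasureTheory

namespace RotAux

open Set Filter Topology

instance : Fact ((0:ℝ) < 1) := ⟨one_pos⟩

/-- The `n`-step vertical displacement. -/
def g (fhat : Cyl → Cyl) (n : ℕ) (z : Cyl) : ℝ := (fhat^[n] z).2 - z.2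

/-- A compact connected fundamental domain for vertical translation. -/
def K : Set Cyl := Set.univ ×ˢ Set.Icc (0:ℝ) 1

variable {fhat : Cyl → Cyl}

/-- fhat commutes with the vertical translation by 1. -/
def Step (fhat : Cyl → Cyl) : Prop :=
  ∀ z : Cyl, fhat (z.1, z.2 + 1) = ((fhat z).1, (fhat z).2 + 1)

lemma iter_step (hs : Step fhat) (n : ℕ) (z : Cyl) :
    fhat^[n] (z.1, z.2 + 1) = ((fhat^[n] z).1, (fhat^[n] z).2 + 1) := by
  induction n with
  | zero => simp
  | succ n ih =>
    rw [Function.iterate_succ_apply', Function.iterate_succ_apply', ih]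
    exact hs _

lemma g_step (hs : Step fhat) (n : ℕ) (z : Cyl) : g fhat n (z.1, z.2 + 1) = g fhat n z := by
  simp [g, iter_step hs]

lemma g_shiftN (hs : Step fhat) (n m : ℕ) (θ : AddCircle (1:ℝ)) (y : ℝ) :
    g fhat n (θ, y + m) = g fhat n (θ, y) := by
  induction m with
  | zero => simp
  | succ m ih =>
    have h : y + ((m + 1 : ℕ) : ℝ) = (y + m) + 1 := by push_cast; ring
    rw [h]
    calc g fhat n (θ, (y + m) + 1) = g fhat n (θ, y + (m:ℝ)) := g_step hs n (θ, y + m)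
    _ = _ := ih

lemma g_mem (hs : Step fhat) (n : ℕ) (z : Cyl) : g fhat n z ∈ g fhat n '' K := by
  obtain ⟨θ, y⟩ := z
  have hcK : (θ, Int.fract y) ∈ K :=
    ⟨Set.mem_univ _, ⟨Int.fract_nonneg _, (Int.fract_lt_one _).le⟩⟩
  refine ⟨(θ, Int.fract y), hcK, ?_⟩
  rcases le_or_gt 0 ⌊y⌋ with h | h
  · have hy : y = Int.fract y + ((⌊y⌋.toNat : ℕ) : ℝ) := by
      have h2 : ((⌊y⌋.toNat : ℕ) : ℝ) = ((⌊y⌋ : ℤ) : ℝ) := by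
        exact_mod_cast congrArg (Int.cast : ℤ → ℝ) (Int.toNat_of_nonneg h)
      rw [h2, Int.fract]; ring
    conv_rhs => rw [hy]
    exact (g_shiftN hs n _ θ _).symm
  · have hy : Int.fract y = y + (((-⌊y⌋).toNat : ℕ) : ℝ) := by
      have h2 : (((-⌊y⌋).toNat : ℕ) : ℝ) = ((-⌊y⌋ : ℤ) : ℝ) := by
        exact_mod_cast congrArg (Int.cast : ℤ → ℝ) (Int.toNat_of_nonneg (by omega))
      rw [h2, Int.fract]; push_cast; ring
    rw [hy]
    exact g_shiftN hs n _ θ y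

/-- inf and sup of the displacement over the fundamental domain. -/
def l (fhat : Cyl → Cyl) (n : ℕ) : ℝ := sInf (g fhat n '' K)
def u (fhat : Cyl → Cyl) (n : ℕ) : ℝ := sSup (g fhat n '' K)

lemma continuous_g (hc : Continuous fhat) (n : ℕ) : Continuous (g fhat n) :=
  (continuous_snd.comp (hc.iterate n)).sub continuous_snd

lemma K_compact : IsCompact K := isCompact_univ.prod isCompact_Icc

lemma K_conn : IsConnected K :=
  ⟨⟨((0 : AddCircle (1:ℝ)), (0:ℝ)), Set.mem_univ _, by norm_num⟩,
    isPreconnected_univ.prod isPreconnected_Icc⟩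

lemma S_eq (hc : Continuous fhat) (n : ℕ) :
    g fhat n '' K = Set.Icc (l fhat n) (u fhat n) :=
  eq_Icc_of_connected_compact (K_conn.image _ (continuous_g hc n).continuousOn)
    (K_compact.image (continuous_g hc n))

lemma g_bounds (hs : Step fhat) (hc : Continuous fhat) (n : ℕ) (z : Cyl) :
    g fhat n z ∈ Set.Icc (l fhat n) (u fhat n) := by
  rw [← S_eq hc n]; exact g_mem hs n z

lemma g_cocycle (m n : ℕ) (z : Cyl) :
    g fhat (m + n) z = g fhat m (fhat^[n] z) + g fhat n z := by
  simp [g, Function.iterate_add_apply]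

lemma S_nonempty (hs : Step fhat) (n : ℕ) : (g fhat n '' K).Nonempty :=
  ⟨_, g_mem hs n ((0 : AddCircle (1:ℝ)), (0:ℝ))⟩

lemma u_subadd (hs : Step fhat) (hc : Continuous fhat) : Subadditive (u fhat) := by
  intro m n
  apply csSup_le (S_nonempty hs (m + n))
  rintro x ⟨w, hw, rfl⟩
  rw [g_cocycle]
  have h1 : g fhat m (fhat^[n] w) ≤ u fhat m := (g_bounds hs hc m _).2
  have h2 : g fhat n w ≤ u fhat n := (g_bounds hs hc n _).2
  linarith

lemma l_superadd (hs : Step fhat) (hc : Continuous fhat) (m n : ℕ) :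
    l fhat m + l fhat n ≤ l fhat (m + n) := by
  apply le_csInf (S_nonempty hs (m + n))
  rintro x ⟨w, hw, rfl⟩
  rw [g_cocycle]
  have h1 : l fhat m ≤ g fhat m (fhat^[n] w) := (g_bounds hs hc m _).1
  have h2 : l fhat n ≤ g fhat n w := (g_bounds hs hc n _).1
  linarith

lemma l_le_u (hs : Step fhat) (hc : Continuous fhat) (n : ℕ) : l fhat n ≤ u fhat n :=
  le_trans (g_bounds hs hc n ((0 : AddCircle (1:ℝ)), (0:ℝ))).1
    (g_bounds hs hc n ((0 : AddCircle (1:ℝ)), (0:ℝ))).2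

lemma S_zero : g fhat 0 '' K = {0} := by
  have h : g fhat 0 = fun _ => (0:ℝ) := by funext z; simp [g]
  rw [h]
  exact Set.Nonempty.image_const ⟨_, K_conn.nonempty.some_mem⟩ 0

lemma u_zero : u fhat 0 = 0 := by rw [u, S_zero]; exact csSup_singleton 0
lemma l_zero : l fhat 0 = 0 := by rw [l, S_zero]; exact csInf_singleton 0

end RotAux

open Filter Topology in
/-- The vertical rotation set `ρ_V(f̂)` is a nonempty compact
interval `[a, b]` of the real line. -/
theorem rotSet_is_nonempty_compact_interval
    (L : DehnLift) (fhat : Cyl → Cyl)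
    (hfhat : ∀ z : ℝ × ℝ, projCyl (L.F z) = fhat (projCyl z)) :
    ∃ a b : ℝ, a ≤ b ∧ rotSet fhat = Set.Icc a b := by
  classical
  -- `projCyl` is an open quotient map
  have hq : IsOpenQuotientMap projCyl := by
    have he : projCyl = Prod.map ((↑) : ℝ → AddCircle (1:ℝ)) (id : ℝ → ℝ) := rfl
    rw [he]
    exact QuotientAddGroup.isOpenQuotientMap_mk.prodMap IsOpenQuotientMap.id
  -- `fhat` is continuous
  have hc : Continuous fhat := by
    rw [hq.isQuotientMap.continuous_iff]
    have he : fhat ∘ projCyl = projCyl ∘ ⇑L.F := funext fun z => (hfhat z).symm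
    rw [he]
    exact hq.continuous.comp L.F.continuous
  -- `fhat` commutes with the vertical translation by one
  have hk0 : (((L.k : ℝ)) : AddCircle (1:ℝ)) = 0 :=
    (AddCircle.coe_eq_zero_iff (1:ℝ)).mpr ⟨L.k, by simp⟩
  have hs : RotAux.Step fhat := by
    intro z
    obtain ⟨w, rfl⟩ := hq.surjective z
    have e1 : ((projCyl w).1, (projCyl w).2 + 1) = projCyl (w.1, w.2 + 1) := rfl
    rw [e1, ← hfhat, ← hfhat]
    have e2 : L.F (w.1, w.2 + 1) = L.F w + ((L.k : ℝ), 1) := by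
      have hv := L.vert w.1 w.2
      rwa [Prod.mk.eta] at hv
    rw [e2]
    show projCyl (L.F w + ((L.k:ℝ), 1)) = ((projCyl (L.F w)).1, (projCyl (L.F w)).2 + 1)
    simp [projCyl, Prod.ext_iff, AddCircle.coe_add, hk0]
  -- set up the inf/sup sequences
  set l : ℕ → ℝ := RotAux.l fhat with hldef
  set u : ℕ → ℝ := RotAux.u fhat with hudef
  have hU : Subadditive u := RotAux.u_subadd hs hc
  have hV : Subadditive (fun n => -(l n)) := by
    intro m n
    have h := RotAux.l_superadd hs hc m n
    simp only
    linarith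
  have hu0 : u 0 = 0 := RotAux.u_zero
  have hl0 : l 0 = 0 := RotAux.l_zero
  have hlu : ∀ n, l n ≤ u n := RotAux.l_le_u hs hc
  have hun : ∀ n : ℕ, u n ≤ (n:ℝ) * u 1 := by
    intro n
    have h := hU.apply_mul_add_le n 1 0
    simpa [hu0] using h
  have hln : ∀ n : ℕ, (n:ℝ) * l 1 ≤ l n := by
    intro n
    have h := hV.apply_mul_add_le n 1 0
    simp only [Nat.mul_one, Nat.add_zero, hl0, neg_zero, add_zero] at h
    linarith
  -- boundedness below of the relevant sequences
  have bddU : BddBelow (Set.range fun n : ℕ => u n / n) := by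
    refine ⟨min 0 (l 1), ?_⟩
    rintro x ⟨n, rfl⟩
    rcases Nat.eq_zero_or_pos n with h0 | hpos
    · simp only [h0, Nat.cast_zero, div_zero]
      exact min_le_left _ _
    · have hn : (0:ℝ) < n := by exact_mod_cast hpos
      have h : l 1 ≤ u n / n := by
        rw [le_div_iff₀ hn]
        calc l 1 * n = (n:ℝ) * l 1 := mul_comm _ _
        _ ≤ l n := hln n
        _ ≤ u n := hlu n
      exact le_trans (min_le_right _ _) h
  have bddV : BddBelow (Set.range fun n : ℕ => -(l n) / n) := by
    refine ⟨min 0 (-(u 1)), ?_⟩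
    rintro x ⟨n, rfl⟩
    rcases Nat.eq_zero_or_pos n with h0 | hpos
    · simp only [h0, Nat.cast_zero, div_zero]
      exact min_le_left _ _
    · have hn : (0:ℝ) < n := by exact_mod_cast hpos
      have h : -(u 1) ≤ -(l n) / n := by
        rw [le_div_iff₀ hn]
        have h1 : l n ≤ (n:ℝ) * u 1 := le_trans (hlu n) (hun n)
        have h2 : -(u 1) * (n:ℝ) = -((n:ℝ) * u 1) := by ring
        linarith
      exact le_trans (min_le_right _ _) h
  -- the endpoints
  set b : ℝ := hU.lim with hbdef
  set a : ℝ := -(hV.lim) with hadef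
  have tendU : Tendsto (fun n : ℕ => u n / n) atTop (𝓝 b) := hU.tendsto_lim bddU
  have tendL : Tendsto (fun n : ℕ => l n / n) atTop (𝓝 a) := by
    have h := (hV.tendsto_lim bddV).neg
    simp only [neg_div, neg_neg] at h
    exact h
  have hab : a ≤ b := by
    refine le_of_tendsto_of_tendsto' tendL tendU fun n => ?_
    rcases Nat.eq_zero_or_pos n with h0 | hpos
    · simp [h0]
    · have hn : (0:ℝ) < n := by exact_mod_cast hpos
      exact (div_le_div_iff_of_pos_right hn).mpr (hlu n)
  have hbub : ∀ n : ℕ, n ≠ 0 → b ≤ u n / n := fun n hn => hU.lim_le_div bddU hn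
  have hbla : ∀ n : ℕ, n ≠ 0 → l n / n ≤ a := by
    intro n hn
    have h := hV.lim_le_div bddV hn
    have h2 : -(l n) / (n:ℝ) = -(l n / n) := neg_div _ _
    rw [h2] at h
    rw [hadef]
    linarith
  -- the level-n displacement sets
  have hEsub : ∀ n : ℕ, n ≠ 0 →
      {r : ℝ | ∃ z : Cyl, r = ((fhat^[n] z).2 - z.2) / n} ⊆ Set.Icc (l n / n) (u n / n) := by
    rintro n hn r ⟨z, rfl⟩
    have hn' : (0:ℝ) < n := by exact_mod_cast Nat.pos_of_ne_zero hn
    have hb := RotAux.g_bounds hs hc n z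
    exact ⟨(div_le_div_iff_of_pos_right hn').mpr hb.1, (div_le_div_iff_of_pos_right hn').mpr hb.2⟩
  have hEsup : ∀ n : ℕ, n ≠ 0 →
      Set.Icc (l n / n) (u n / n) ⊆ {r : ℝ | ∃ z : Cyl, r = ((fhat^[n] z).2 - z.2) / n} := by
    intro n hn r hr
    have hn' : (0:ℝ) < n := by exact_mod_cast Nat.pos_of_ne_zero hn
    have hmem : r * n ∈ RotAux.g fhat n '' RotAux.K := by
      rw [RotAux.S_eq hc n]
      exact ⟨(div_le_iff₀ hn').mp hr.1, (le_div_iff₀ hn').mp hr.2⟩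
    obtain ⟨w, _, hww⟩ := hmem
    refine ⟨w, ?_⟩
    have hgw : (fhat^[n] w).2 - w.2 = RotAux.g fhat n w := rfl
    rw [hgw, hww, mul_div_cancel_right₀ r hn'.ne']
  refine ⟨a, b, hab, ?_⟩
  apply Set.Subset.antisymm
  · -- rotSet ⊆ [a,b]
    intro x hx
    rw [rotSet, Set.mem_iInter] at hx
    have key : ∀ ε : ℝ, 0 < ε → a - ε ≤ x ∧ x ≤ b + ε := by
      intro ε hε
      have h1 : ∀ᶠ n : ℕ in atTop, a - ε < l n / n :=
        tendL.eventually (eventually_gt_nhds (by linarith))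
      have h2 : ∀ᶠ n : ℕ in atTop, u n / n < b + ε :=
        tendU.eventually (eventually_lt_nhds (by linarith))
      obtain ⟨N, hN⟩ := eventually_atTop.mp (h1.and h2)
      have hclose : closure (⋃ n : ℕ, ⋃ _ : N + 1 ≤ n,
          {r : ℝ | ∃ z : Cyl, r = ((fhat^[n] z).2 - z.2) / n}) ⊆ Set.Icc (a - ε) (b + ε) := by
        apply closure_minimal ?_ isClosed_Icc
        intro r hr
        simp only [Set.mem_iUnion] at hr
        obtain ⟨n, hn, hrn⟩ := hr
        have hb := hEsub n (by omega) hrn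
        have hNn := hN n (by omega)
        exact ⟨le_trans hNn.1.le hb.1, le_trans hb.2 hNn.2.le⟩
      exact ⟨(hclose (hx N)).1, (hclose (hx N)).2⟩
    constructor
    · by_contra hlt
      push_neg at hlt
      have h := (key ((a - x) / 2) (by linarith)).1
      linarith
    · by_contra hlt
      push_neg at hlt
      have h := (key ((x - b) / 2) (by linarith)).2
      linarith
  · -- [a,b] ⊆ rotSet
    intro x hx
    rw [rotSet, Set.mem_iInter]
    intro i
    apply subset_closure
    refine Set.mem_iUnion.mpr ⟨i + 1, Set.mem_iUnion.mpr ⟨le_refl _, ?_⟩⟩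
    apply hEsup (i + 1) (by omega)
    exact ⟨le_trans (hbla (i + 1) (by omega)) hx.1, le_trans hx.2 (hbub (i + 1) (by omega))⟩
end
end

section
/- Let F be a closed subset of the vertical cylinder A = (ℝ/ℤ)×ℝ. Then the union of all unbounded connected components of F is a closed subset of A. -/
noncomputable section

open MeasureTheory

/-- For a closed subset `F` of the vertical cylinder, the union
of all unbounded connected components of `F` is closed. -/
theorem union_of_unbounded_components_isClosed
    (F : Set Cyl) (hF : IsClosed F) :
    IsClosed {z | z ∈ F ∧ ¬ VBounded (connectedComponentIn F z)} := by
  set S : Set Cyl := {z | z ∈ F ∧ ¬ VBounded (connectedComponentIn F z)} with hS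
  have hSF : S ⊆ F := fun w hw => hw.1
  refine isClosed_of_closure_subset ?_
  intro z hz
  have hzF : z ∈ F := hF.closure_subset (closure_mono hSF hz)
  refine ⟨hzF, ?_⟩
  intro hVB
  obtain ⟨M, hM⟩ := hVB
  have hzM : |z.2| ≤ M := hM z (mem_connectedComponentIn hzF)
  -- the compact slab
  set K : Set Cyl := {w | |w.2| ≤ M + 1} with hK
  have hKcomp : IsCompact K := by
    have hKeq : K = (Set.univ : Set (AddCircle (1 : ℝ))) ×ˢ Set.Icc (-(M + 1)) (M + 1) := by
      ext w
      simp [hK, abs_le, Set.mem_prod]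
    haveI : Fact ((0 : ℝ) < 1) := ⟨one_pos⟩
    rw [hKeq]
    exact isCompact_univ.prod isCompact_Icc
  set F' : Set Cyl := F ∩ K with hF'
  have hF'comp : IsCompact F' := hKcomp.inter_left hF
  haveI : CompactSpace F' := isCompact_iff_compactSpace.mp hF'comp
  have hzF' : z ∈ F' := ⟨hzF, by simp only [hK, Set.mem_setOf_eq]; linarith⟩
  set c : F' := ⟨z, hzF'⟩ with hc
  -- the connected component in `F` equals the one in `F'`
  have hCsub : connectedComponentIn F z ⊆ F' := by
    intro w hw
    exact ⟨connectedComponentIn_subset F z hw, by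
      simp only [hK, Set.mem_setOf_eq]; have := hM w hw; linarith⟩
  have hC_eq : connectedComponentIn F z = connectedComponentIn F' z := by
    apply Set.Subset.antisymm
    · exact (isPreconnected_connectedComponentIn).subset_connectedComponentIn
        (mem_connectedComponentIn hzF) hCsub
    · exact connectedComponentIn_mono z (Set.inter_subset_left)
  have himg : Subtype.val '' connectedComponent c = connectedComponentIn F z := by
    rw [hC_eq, connectedComponentIn_eq_image hzF']
  have hbound : ∀ w ∈ connectedComponent c, |(w : Cyl).2| ≤ M := by
    intro w hw
    exact hM _ (himg ▸ Set.mem_image_of_mem _ hw)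
  -- the "far" closed set in the slab
  set D : Set F' := {w | M + 1 / 2 ≤ |(w : Cyl).2|} with hD
  have hDclosed : IsClosed D := isClosed_le continuous_const
    ((continuous_snd.comp continuous_subtype_val).abs)
  have hDcomp : IsCompact D := hDclosed.isCompact
  have hdisj : (D ∩ ⋂ Z : { Z : Set F' // IsClopen Z ∧ c ∈ Z }, (Z : Set F')) = ∅ := by
    rw [← connectedComponent_eq_iInter_isClopen c]
    ext w
    simp only [Set.mem_inter_iff, Set.mem_empty_iff_false, iff_false, not_and]
    intro hwD hwC
    have h1 := hbound w hwC
    have h2 : M + 1 / 2 ≤ |(w : Cyl).2| := hwD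
    linarith
  obtain ⟨t, ht⟩ := hDcomp.elim_finite_subfamily_closed _
    (fun Z : { Z : Set F' // IsClopen Z ∧ c ∈ Z } => Z.2.1.isClosed) hdisj
  set U' : Set F' := ⋂ Z ∈ t, (Z : Set F') with hU'
  have hU'clopen : IsClopen U' := isClopen_biInter_finset fun Z _ => Z.2.1
  have hcU' : c ∈ U' := Set.mem_iInter₂.mpr fun Z _ => Z.2.2
  have hU'bound : ∀ w ∈ U', |(w : Cyl).2| < M + 1 / 2 := by
    intro w hw
    by_contra h
    push_neg at h
    have : w ∈ D ∩ ⋂ Z ∈ t, (Z : Set F') := ⟨h, hw⟩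
    rw [ht] at this
    exact this
  -- extract the open set
  obtain ⟨V, hVopen, hVpre⟩ := isOpen_induced_iff.mp hU'clopen.isOpen
  have hUimg : Subtype.val '' U' = F' ∩ V := by
    rw [← hVpre, Subtype.image_preimage_coe]
  set W : Set Cyl := V ∩ {w | |w.2| < M + 1} with hW
  have hWopen : IsOpen W :=
    hVopen.inter (isOpen_lt continuous_snd.abs continuous_const)
  have hFW : F ∩ W = Subtype.val '' U' := by
    rw [hUimg]
    apply Set.Subset.antisymm
    · rintro w ⟨hwF, hwV, hwy⟩
      exact ⟨⟨hwF, by simp only [hK, Set.mem_setOf_eq]; exact le_of_lt hwy⟩, hwV⟩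
    · rintro w ⟨hwF', hwV⟩
      refine ⟨hwF'.1, hwV, ?_⟩
      have : (⟨w, hwF'⟩ : F') ∈ U' := by rw [← hVpre]; exact hwV
      have := hU'bound _ this
      simp only [Set.mem_setOf_eq]
      linarith
  have hUclosed : IsClosed (Subtype.val '' U') :=
    ((hU'clopen.isClosed.isCompact).image continuous_subtype_val).isClosed
  have hzW : z ∈ W := by
    have : z ∈ F ∩ W := by
      rw [hFW]; exact ⟨c, hcU', rfl⟩
    exact this.2
  -- find a point of S inside W
  obtain ⟨w, hwW, hwS⟩ := mem_closure_iff.mp hz W hWopen hzW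
  have hwF : w ∈ F := hwS.1
  have hwFW : w ∈ F ∩ W := ⟨hwF, hwW⟩
  -- `F ∩ W` is clopen in `F`, so it contains the whole component of `w`
  have hclopen : IsClopen (Subtype.val ⁻¹' W : Set F) := by
    constructor
    · have : (Subtype.val ⁻¹' W : Set F) = Subtype.val ⁻¹' (F ∩ W) := by
        ext x
        simp only [Set.mem_preimage, Set.mem_inter_iff]
        exact ⟨fun h => ⟨x.2, h⟩, fun h => h.2⟩
      rw [this, hFW]
      exact hUclosed.preimage continuous_subtype_val
    · exact hWopen.preimage continuous_subtype_val
  have hcomp_sub : connectedComponentIn F w ⊆ F ∩ W := by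
    rw [connectedComponentIn_eq_image hwF]
    intro p hp
    obtain ⟨q, hq, rfl⟩ := hp
    have : q ∈ (Subtype.val ⁻¹' W : Set F) :=
      hclopen.connectedComponent_subset (by exact hwW) hq
    exact ⟨q.2, this⟩
  -- hence it is bounded, contradicting `w ∈ S`
  apply hwS.2
  refine ⟨M + 1, fun p hp => ?_⟩
  have : p ∈ F ∩ W := hcomp_sub hp
  exact le_of_lt this.2.2
end
end
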